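/- arXiv:2403.05656 — 9 statements merged into one kernel-verified Lean document; each statement's English description precedes it below -/
import Mathlib

section
/- If M and N are R-modules such that the canonical map from L(M) × L(N) to L(M ⊕ N) sending (M', N') to M' ⊕ N' is surjective (i.e., every submodule of M ⊕ N is of the form M' ⊕ N'), then for every submodule M' ≤ M and N' ≤ N, Hom_R(M', N) = 0 and Hom_R(N', M) = 0. -/
private lemma graph_trick {R M N : Type*} [Ring R] [AddCommGroup M] [Module R M]
    [AddCommGroup N] [Module R N]
    (h : ∀ L : Submodule R (M × N), ∃ (M' : Submodule R M) (N' : Submodule R N),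
      L = M'.prod N')
    (M' : Submodule R M) (f : M' →ₗ[R] N) : f = 0 := by
  ext m
  obtain ⟨A, B, hAB⟩ := h (Submodule.map (M'.subtype.prod f) ⊤)
  have hm : ((m : M), f m) ∈ Submodule.map (M'.subtype.prod f) ⊤ :=
    ⟨m, trivial, rfl⟩
  rw [hAB] at hm
  have hm0 : ((m : M), (0 : N)) ∈ A.prod B := ⟨hm.1, B.zero_mem⟩
  rw [← hAB] at hm0
  obtain ⟨m', -, hm'⟩ := hm0
  have h1 : (m' : M) = m := congrArg Prod.fst hm'
  have h2 : f m' = 0 := congrArg Prod.snd hm'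
  have : m' = m := Subtype.ext h1
  simpa [this] using h2

/-- If every submodule of `M × N` is of the form `M' × N'` (i.e. the canonical map
`L(M) × L(N) → L(M ⊕ N)` is surjective), then `M` and `N` are orthocyclic:
`Hom_R(M', N) = 0` and `Hom_R(N', M) = 0` for all submodules `M' ≤ M`, `N' ≤ N`. -/
theorem stmt_0 {R M N : Type*} [Ring R] [AddCommGroup M] [Module R M]
    [AddCommGroup N] [Module R N]
    (h : ∀ L : Submodule R (M × N), ∃ (M' : Submodule R M) (N' : Submodule R N),
      L = M'.prod N') :
    ∀ (M' : Submodule R M) (N' : Submodule R N),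
      (∀ f : M' →ₗ[R] N, f = 0) ∧ (∀ g : N' →ₗ[R] M, g = 0) := by
  have h' : ∀ L : Submodule R (N × M), ∃ (N' : Submodule R N) (M' : Submodule R M),
      L = N'.prod M' := by
    intro L
    obtain ⟨A, B, hAB⟩ := h (L.map (LinearEquiv.prodComm R N M).toLinearMap)
    refine ⟨B, A, ?_⟩
    ext ⟨n, m⟩
    have : (m, n) ∈ L.map (LinearEquiv.prodComm R N M).toLinearMap ↔ (n, m) ∈ L := by
      constructor
      · rintro ⟨⟨n', m'⟩, h1, h2⟩
        obtain ⟨rfl, rfl⟩ := Prod.mk.injEq .. ▸ h2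
        simpa using h1
      · intro h1; exact ⟨(n, m), h1, rfl⟩
    rw [← this, hAB]
    simp [Submodule.mem_prod, and_comm]
  intro M' N'
  exact ⟨fun f => graph_trick h M' f, fun g => graph_trick h' N' g⟩
end

section
/- Let M be a semisimple R-module, S a simple R-module, and t ≥ 1. If no simple direct summand of M is isomorphic to S, then every submodule L of M ⊕ S^t equals M' ⊕ N' for some submodules M' ≤ M and N' ≤ S^t. -/
section Aux

variable {R M S : Type*} [Ring R] [AddCommGroup M] [Module R M]
    [AddCommGroup S] [Module R S]

lemma aux_pi_semisimple [IsSimpleModule R S] (t : ℕ) :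
    IsSemisimpleModule R (Fin t → S) := by
  have hS : IsSemisimpleModule R S := inferInstance
  exact isSemisimpleModule_of_isSemisimpleModule_submodule'
    (p := fun i : Fin t => LinearMap.range (LinearMap.single R (fun _ : Fin t => S) i))
    (fun i => IsSemisimpleModule.range _)
    (LinearMap.iSup_range_single R _)

lemma aux_prod_semisimple [IsSemisimpleModule R M] [IsSemisimpleModule R S] :
    IsSemisimpleModule R (M × S) := by
  refine isSemisimpleModule_of_isSemisimpleModule_submodule'
    (p := fun b : Bool => if b then LinearMap.range (LinearMap.inl R M S)
      else LinearMap.range (LinearMap.inr R M S)) (fun b => ?_) ?_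
  · cases b <;>
      exact IsSemisimpleModule.range _
  · rw [iSup_bool_eq]
    simpa using LinearMap.sup_range_inl_inr

lemma aux_simple_dichotomy [IsSemisimpleModule R M] [IsSimpleModule R S] (t : ℕ)
    (h : ∀ T : Submodule R M, IsSimpleModule R T → (∃ T', IsCompl T T') →
      ¬ Nonempty (T ≃ₗ[R] S))
    (W : Submodule R (M × (Fin t → S))) (hW : IsSimpleModule R W) :
    W ≤ Submodule.prod ⊤ ⊥ ∨ W ≤ Submodule.prod ⊥ ⊤ := by
  haveI := hW
  haveI : Nontrivial W := IsSimpleModule.nontrivial R W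
  set f := (LinearMap.snd R M (Fin t → S)).comp W.subtype with hf_def
  rcases f.injective_or_eq_zero with hf | hf
  · -- snd injective on W : W embeds into S^t, hence W ≃ S
    obtain ⟨w, hw⟩ := exists_ne (0 : W)
    have hfw : f w ≠ 0 := fun hz => hw (hf (by simpa using hz))
    obtain ⟨i, hi⟩ : ∃ i, f w i ≠ 0 := by
      by_contra hz
      push_neg at hz
      exact hfw (funext hz)
    set g := (LinearMap.proj i (R := R) (φ := fun _ : Fin t => S)).comp f with hg_def
    have hg : g ≠ 0 := fun hz => hi (by simpa [hg_def] using LinearMap.congr_fun hz w)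
    have hginj : Function.Injective g := g.injective_or_eq_zero.resolve_right hg
    have hgsurj : Function.Surjective g := g.surjective_or_eq_zero.resolve_right hg
    have e : W ≃ₗ[R] S := LinearEquiv.ofBijective g ⟨hginj, hgsurj⟩
    -- now look at the first projection
    set p := (LinearMap.fst R M (Fin t → S)).comp W.subtype with hp_def
    rcases p.injective_or_eq_zero with hp | hp
    · exfalso
      have hsimple : IsSimpleModule R (LinearMap.range p) :=
        IsSimpleModule.congr (LinearEquiv.ofInjective p hp).symm
      have hcompl : ∃ T', IsCompl (LinearMap.range p) T' :=
        ComplementedLattice.exists_isCompl _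
      exact h (LinearMap.range p) hsimple hcompl
        ⟨((LinearEquiv.ofInjective p hp).symm.trans e)⟩
    · right
      intro x hx
      rw [Submodule.mem_prod]
      refine ⟨?_, trivial⟩
      have := LinearMap.congr_fun hp ⟨x, hx⟩
      simpa [hp_def] using this
  · left
    intro x hx
    rw [Submodule.mem_prod]
    refine ⟨trivial, ?_⟩
    have := LinearMap.congr_fun hf ⟨x, hx⟩
    simpa [hf_def] using this

end Aux

/-- Let `M` be semisimple, `S` simple, `t ≥ 1`. If no simple direct summand of `M`
is isomorphic to `S`, then every submodule of `M ⊕ S^t` is of the form `M' ⊕ N'`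
with `M' ≤ M` and `N' ≤ S^t`. -/
theorem stmt_4 {R M S : Type*} [Ring R] [AddCommGroup M] [Module R M]
    [AddCommGroup S] [Module R S] [IsSemisimpleModule R M] [IsSimpleModule R S]
    (t : ℕ) (ht : 1 ≤ t)
    (h : ∀ T : Submodule R M, IsSimpleModule R T → (∃ T', IsCompl T T') →
      ¬ Nonempty (T ≃ₗ[R] S)) :
    ∀ L : Submodule R (M × (Fin t → S)),
      ∃ (M' : Submodule R M) (N' : Submodule R (Fin t → S)), L = M'.prod N' := by
  intro L
  haveI : IsSemisimpleModule R (Fin t → S) := aux_pi_semisimple t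
  haveI : IsSemisimpleModule R (M × (Fin t → S)) := aux_prod_semisimple
  set A := L ⊓ Submodule.prod ⊤ ⊥ with hA_def
  set B := L ⊓ Submodule.prod ⊥ ⊤ with hB_def
  have hLAB : L ≤ A ⊔ B := by
    conv_lhs => rw [← IsSemisimpleModule.sSup_simples_le L]
    apply sSup_le
    rintro W ⟨hWs, hWL⟩
    rcases aux_simple_dichotomy t h W hWs with hw | hw
    · exact le_sup_of_le_left (le_inf hWL hw)
    · exact le_sup_of_le_right (le_inf hWL hw)
  have hmem : ∀ x ∈ L, ((0 : M), x.2) ∈ L ∧ (x.1, (0 : Fin t → S)) ∈ L := by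
    intro x hx
    obtain ⟨a, ha, b, hb, hab⟩ := Submodule.mem_sup.mp (hLAB hx)
    have ha2 : a.2 = 0 := by
      have := (Submodule.mem_prod.mp ha.2).2
      simpa using this
    have hb1 : b.1 = 0 := by
      have := (Submodule.mem_prod.mp hb.2).1
      simpa using this
    have hbx : b = ((0 : M), x.2) := by
      have hx2 : x.2 = b.2 := by rw [← hab]; simp [ha2]
      exact Prod.ext hb1 hx2.symm
    have h1 : ((0 : M), x.2) ∈ L := hbx ▸ hb.1
    refine ⟨h1, ?_⟩
    have : (x.1, (0 : Fin t → S)) = x - ((0 : M), x.2) := by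
      ext <;> simp
    rw [this]
    exact L.sub_mem hx h1
  refine ⟨L.map (LinearMap.fst R M (Fin t → S)), L.map (LinearMap.snd R M (Fin t → S)), ?_⟩
  ext x
  simp only [Submodule.mem_prod, Submodule.mem_map]
  constructor
  · intro hx
    exact ⟨⟨x, hx, rfl⟩, ⟨x, hx, rfl⟩⟩
  · rintro ⟨⟨y, hy, hy1⟩, ⟨z, hz, hz2⟩⟩
    have h1 := (hmem y hy).2
    have h2 := (hmem z hz).1
    have hx : x = (y.1, (0 : Fin t → S)) + ((0 : M), z.2) := by
      ext
      · simpa using hy1.symm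
      · simpa using congr_fun hz2.symm _
    rw [hx]
    exact L.add_mem h1 h2
end

section
/- Let S be a simple R-module such that End_R(S) is finite with q elements, and let t ≥ 1. Then the number of simple submodules of S^t equals 1 + q + q² + ... + q^{t-1} = (q^t − 1)/(q − 1). -/
open LinearMap

section Aux

variable {R S : Type*} [Ring R] [AddCommGroup S] [Module R S] [IsSimpleModule R S]

/-- Hom from S to a t-fold power, as a pi type of endomorphisms. -/
def homPiEquiv (t : ℕ) : (S →ₗ[R] (Fin t → S)) ≃ (Fin t → Module.End R S) where
  toFun f i := (LinearMap.proj i).comp f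
  invFun g := LinearMap.pi g
  left_inv f := by ext x i; rfl
  right_inv g := by ext i x; rfl

lemma range_simple {t : ℕ} {f : S →ₗ[R] (Fin t → S)} (hf : f ≠ 0) :
    IsSimpleModule R (LinearMap.range f) :=
  IsSimpleModule.congr (LinearEquiv.ofInjective f (f.injective_of_ne_zero hf)).symm

lemma exists_range_eq {t : ℕ} (T : Submodule R (Fin t → S)) (hT : IsSimpleModule R T) :
    ∃ f : S →ₗ[R] (Fin t → S), f ≠ 0 ∧ LinearMap.range f = T := by
  have : Nontrivial T := IsSimpleModule.nontrivial R T
  obtain ⟨x, hx⟩ := exists_ne (0 : T)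
  have hx' : (x : Fin t → S) ≠ 0 := by
    simpa [Submodule.coe_eq_zero] using hx
  obtain ⟨i, hi⟩ := Function.ne_iff.mp hx'
  set p : T →ₗ[R] S := (LinearMap.proj i).comp T.subtype with hp
  have hpne : p ≠ 0 := by
    intro h
    exact hi (by simpa [hp] using LinearMap.congr_fun h x)
  have hbij : Function.Bijective p := p.bijective_of_ne_zero hpne
  let E : T ≃ₗ[R] S := LinearEquiv.ofBijective p hbij
  refine ⟨T.subtype.comp E.symm.toLinearMap, ?_, ?_⟩
  · intro h
    have : Nontrivial S := IsSimpleModule.nontrivial R S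
    obtain ⟨s, hs⟩ := exists_ne (0 : S)
    have := LinearMap.congr_fun h s
    simp only [LinearMap.comp_apply, LinearMap.zero_apply] at this
    have : E.symm s = 0 := by
      exact_mod_cast (Submodule.coe_eq_zero).mp this
    exact hs (by simpa using congrArg E this)
  · have htop : LinearMap.range (E.symm.toLinearMap) = ⊤ := LinearEquiv.range E.symm
    rw [LinearMap.range_comp_of_range_eq_top T.subtype htop]
    exact Submodule.range_subtype T

lemma fiber_equiv {t : ℕ} [Finite (Module.End R S)]
    (T : Submodule R (Fin t → S)) (hT : IsSimpleModule R T) :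
    Nonempty ({g : {f : S →ₗ[R] (Fin t → S) // f ≠ 0} // LinearMap.range g.1 = T}
      ≃ (Module.End R S)ˣ) := by
  classical
  obtain ⟨f₀, hf₀, hr₀⟩ := exists_range_eq T hT
  have hinj : Function.Injective f₀ := f₀.injective_of_ne_zero hf₀
  let E : S ≃ₗ[R] LinearMap.range f₀ := LinearEquiv.ofInjective f₀ hinj
  have hE : ∀ y : LinearMap.range f₀, f₀ (E.symm y) = (y : Fin t → S) := by
    intro y
    conv_rhs => rw [← E.apply_symm_apply y]
    rfl
  have hS : Nontrivial S := IsSimpleModule.nontrivial R S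
  have hcomp : ∀ e : (Module.End R S)ˣ, f₀.comp (e : Module.End R S) ≠ 0 := by
    intro e h
    obtain ⟨s, hs⟩ := exists_ne (0 : S)
    have hbij : Function.Bijective (e : Module.End R S) :=
      LinearMap.bijective_of_ne_zero e.ne_zero
    have hes : (e : Module.End R S) s ≠ 0 := fun h0 => hs (hbij.1 (by simpa using h0))
    have h1 := LinearMap.congr_fun h s
    simp only [LinearMap.comp_apply, LinearMap.zero_apply] at h1
    exact hes (hinj (by simpa using h1))
  have hrange : ∀ e : (Module.End R S)ˣ,
      LinearMap.range (f₀.comp (e : Module.End R S)) = T := by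
    intro e
    have hbij : Function.Bijective (e : Module.End R S) :=
      LinearMap.bijective_of_ne_zero e.ne_zero
    rw [LinearMap.range_comp_of_range_eq_top f₀ (LinearMap.range_eq_top.mpr hbij.2), hr₀]
  refine ⟨Equiv.symm (Equiv.ofBijective (fun e : (Module.End R S)ˣ =>
    ⟨⟨f₀.comp (e : Module.End R S), hcomp e⟩, hrange e⟩) ⟨?_, ?_⟩)⟩
  · intro e e' h
    have h2 : f₀.comp (e : Module.End R S) = f₀.comp (e' : Module.End R S) := by
      simpa using congrArg (fun a => a.1.1) h
    ext s
    exact hinj (LinearMap.congr_fun h2 s)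
  · rintro ⟨⟨g, hg⟩, hgr⟩
    have hmem : ∀ x, g x ∈ LinearMap.range f₀ := by
      intro x
      rw [hr₀, ← hgr]
      exact LinearMap.mem_range_self g x
    set e : Module.End R S := E.symm.toLinearMap.comp (g.codRestrict (LinearMap.range f₀) hmem)
      with he
    have hfe : f₀.comp e = g := by
      ext s
      simp only [he, LinearMap.comp_apply, LinearEquiv.coe_coe]
      rw [hE]
      rfl
    have hene : e ≠ 0 := by
      intro h0
      exact hg (by rw [← hfe, h0, LinearMap.comp_zero])
    have heu : IsUnit e := isUnit_iff_ne_zero.mpr hene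
    refine ⟨heu.unit, ?_⟩
    apply Subtype.ext
    apply Subtype.ext
    show f₀.comp (heu.unit : Module.End R S) = g
    rw [heu.unit_spec, hfe]

end Aux

/-- Let `S` be a simple `R`-module whose endomorphism ring is finite with `q`
elements, and `t ≥ 1`. Then the number of simple submodules of `S^t` equals
`1 + q + q² + ⋯ + q^{t-1}`. -/
theorem stmt_9 {R S : Type*} [Ring R] [AddCommGroup S] [Module R S]
    [IsSimpleModule R S] [Finite (Module.End R S)] (q t : ℕ)
    (hq : Nat.card (Module.End R S) = q) (ht : 1 ≤ t) :
    Nat.card {T : Submodule R (Fin t → S) // IsSimpleModule R T} =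
      ∑ i ∈ Finset.range t, q ^ i := by
  classical
  have hFinHom : Finite (S →ₗ[R] (Fin t → S)) := Finite.of_equiv _ (homPiEquiv t).symm
  let A := {f : S →ₗ[R] (Fin t → S) // f ≠ 0}
  let B := {T : Submodule R (Fin t → S) // IsSimpleModule R T}
  let π : A → B := fun f => ⟨LinearMap.range f.1, range_simple f.2⟩
  have hπ : Function.Surjective π := by
    rintro ⟨T, hT⟩
    obtain ⟨f, hf, hr⟩ := exists_range_eq T hT
    exact ⟨⟨f, hf⟩, Subtype.ext hr⟩
  have hB : Finite B := Finite.of_surjective π hπ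
  have key : Nat.card A = Nat.card B * (q - 1) := by
    have fib : ∀ b : B, Nonempty ({a : A // π a = b} ≃ (Module.End R S)ˣ) := by
      rintro ⟨T, hT⟩
      obtain ⟨eqv⟩ := fiber_equiv T hT
      refine ⟨(Equiv.subtypeEquivRight ?_).trans eqv⟩
      intro a
      constructor
      · intro h
        exact congrArg Subtype.val h
      · intro h
        exact Subtype.ext h
    have e : ∀ b : B, {a : A // π a = b} ≃ (Module.End R S)ˣ := fun b => (fib b).some
    calc Nat.card A = Nat.card (Σ b : B, {a : A // π a = b}) :=
          (Nat.card_congr (Equiv.sigmaFiberEquiv π)).symm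
      _ = Nat.card (B × (Module.End R S)ˣ) :=
          Nat.card_congr ((Equiv.sigmaCongrRight e).trans (Equiv.sigmaEquivProd _ _))
      _ = Nat.card B * Nat.card (Module.End R S)ˣ := Nat.card_prod _ _
      _ = Nat.card B * (q - 1) := by rw [Nat.card_units, hq]
  have hcardA : Nat.card A = q ^ t - 1 := by
    have e1 : A ≃ {g : Fin t → Module.End R S // g ≠ 0} := by
      refine (homPiEquiv t).subtypeEquiv ?_
      intro f
      constructor
      · intro hf h0
        exact hf ((homPiEquiv t).injective (by rw [h0]; ext i x; simp [homPiEquiv]))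
      · intro hg h0
        subst h0
        exact hg (by ext i x; simp [homPiEquiv])
    rw [Nat.card_congr e1]
    have : Fintype (Module.End R S) := Fintype.ofFinite _
    rw [Nat.card_eq_fintype_card]
    calc Fintype.card {g : Fin t → Module.End R S // g ≠ 0}
        = Fintype.card (Fin t → Module.End R S) -
            Fintype.card {g : Fin t → Module.End R S // g = 0} :=
          Fintype.card_subtype_compl _
      _ = q ^ t - 1 := by
          rw [Fintype.card_subtype_eq, Fintype.card_fun, ← Nat.card_eq_fintype_card, hq,
            Fintype.card_fin]
  have hq2 : 2 ≤ q := by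
    rw [← hq]
    exact Finite.one_lt_card_iff_nontrivial.mpr inferInstance
  have hne : ((q : ℤ) - 1) ≠ 0 := by
    have : (2 : ℤ) ≤ (q : ℤ) := by exact_mod_cast hq2
    omega
  have hZ : (Nat.card B : ℤ) * ((q : ℤ) - 1) =
      ((∑ i ∈ Finset.range t, q ^ i : ℕ) : ℤ) * ((q : ℤ) - 1) := by
    have h1 : (Nat.card A : ℤ) = (q : ℤ) ^ t - 1 := by
      rw [hcardA, Nat.cast_sub (Nat.one_le_pow _ _ (by omega))]
      push_cast
      ring
    have h2 : (Nat.card A : ℤ) = (Nat.card B : ℤ) * ((q : ℤ) - 1) := by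
      rw [key]
      push_cast [Nat.cast_sub (by omega : 1 ≤ q)]
      ring
    rw [← h2, h1]
    push_cast
    rw [geom_sum_mul]
  have := mul_right_cancel₀ hne hZ
  exact_mod_cast this
end

section
/- Let M be a finite-length R-module whose lattice of submodules L(M) is infinite. Then there exists a submodule K ≤ M and a simple R-module S with End_R(S) infinite such that M/K contains a submodule isomorphic to S ⊕ S. -/
open Order Submodule

universe u v

section HeightLemmas

variable {α β : Type*} [Preorder α] [Preorder β]

private lemma aux_height_prod (n : ℕ) :
    ∀ (a : α) (b : β), Order.height a + Order.height b ≤ n → Order.height (a, b) ≤ n := by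
  induction n with
  | zero =>
    intro a b hab
    rw [Nat.cast_zero, nonpos_iff_eq_zero, add_eq_zero] at hab
    have ha := Order.height_eq_zero.mp hab.1
    have hb := Order.height_eq_zero.mp hab.2
    rw [Nat.cast_zero, nonpos_iff_eq_zero, Order.height_eq_zero]
    rintro ⟨c, d⟩ hcd
    exact ⟨ha hcd.1, hb hcd.2⟩
  | succ n ih =>
    intro a b hab
    rw [Order.height_le_coe_iff]
    rintro ⟨c, d⟩ hcd
    have hne : ((n:ℕ∞) + 1) ≠ ⊤ := by
      have : ((n+1:ℕ):ℕ∞) ≠ ⊤ := ENat.coe_ne_top _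
      simpa [Nat.cast_add] using this
    have hha : Order.height a ≠ ⊤ := by
      intro h
      rw [h] at hab
      exact hne (top_le_iff.mp (le_trans le_top (by rw [← top_add (Order.height b)]; exact hab)))
    have hhb : Order.height b ≠ ⊤ := by
      intro h
      rw [h] at hab
      exact hne (top_le_iff.mp (le_trans le_top (by rw [← add_top (Order.height a)]; exact hab)))
    have hc : Order.height c ≠ ⊤ := by
      have : Order.height c ≤ Order.height a := Order.height_mono (le_of_lt hcd).1
      exact fun h => hha (top_le_iff.mp (h ▸ this))
    have hd : Order.height d ≠ ⊤ := by
      have : Order.height d ≤ Order.height b := Order.height_mono (le_of_lt hcd).2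
      exact fun h => hhb (top_le_iff.mp (h ▸ this))
    lift Order.height a to ℕ using hha with na hna
    lift Order.height b to ℕ using hhb with nb hnb
    lift Order.height c to ℕ using hc with nc hnc
    lift Order.height d to ℕ using hd with nd hnd
    have hsum : na + nb ≤ n + 1 := by exact_mod_cast hab
    have hca : nc ≤ na := by exact_mod_cast hnc ▸ hna ▸ Order.height_mono (le_of_lt hcd).1
    have hdb : nd ≤ nb := by exact_mod_cast hnd ▸ hnb ▸ Order.height_mono (le_of_lt hcd).2
    have key : nc + nd ≤ n := by
      rcases Prod.lt_iff.mp hcd with ⟨h1, _⟩ | ⟨_, h2⟩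
      · have : Order.height c < Order.height a :=
          Order.height_strictMono h1 (by rw [← hnc]; exact lt_top_iff_ne_top.mpr (by simp))
        have : nc < na := by exact_mod_cast hnc ▸ hna ▸ this
        omega
      · have : Order.height d < Order.height b :=
          Order.height_strictMono h2 (by rw [← hnd]; exact lt_top_iff_ne_top.mpr (by simp))
        have : nd < nb := by exact_mod_cast hnd ▸ hnb ▸ this
        omega
    have := ih c d (by rw [← hnc, ← hnd]; exact_mod_cast key)
    calc Order.height (c, d) ≤ (n : ℕ∞) := this
      _ < (n + 1 : ℕ) := by exact_mod_cast Nat.lt_succ_self n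

lemma height_prod_le (a : α) (b : β) :
    Order.height (a, b) ≤ Order.height a + Order.height b := by
  rcases eq_or_ne (Order.height a + Order.height b) ⊤ with h | h
  · simp [h]
  · lift Order.height a + Order.height b to ℕ using h with n hn
    exact aux_height_prod n a b (le_of_eq hn.symm)

lemma height_le_one_of_isSimpleOrder {γ : Type*} [PartialOrder γ] [BoundedOrder γ]
    [IsSimpleOrder γ] (x : γ) : Order.height x ≤ 1 := by
  rw [show (1 : ℕ∞) = ((1 : ℕ) : ℕ∞) from rfl, Order.height_le_coe_iff]
  intro y hy
  have hyb : y = ⊥ := by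
    rcases IsSimpleOrder.eq_bot_or_eq_top y with h | h
    · exact h
    · exact absurd le_top (not_le_of_gt (h ▸ hy))
  subst hyb
  simp

end HeightLemmas

section ModuleHeight

variable {R : Type u} [Ring R]

lemma height_submodule_top_le {M : Type v} [AddCommGroup M] [Module R M] (N : Submodule R M) :
    Order.height (⊤ : Submodule R ↥N) ≤ Order.height N := by
  have h := Order.height_le_height_apply_of_strictMono _
    (Submodule.MapSubtype.orderEmbedding N).strictMono ⊤
  have e : (Submodule.MapSubtype.orderEmbedding N) ⊤ = N := by
    simp
  rwa [e] at h

lemma height_quotient_top_le {M : Type v} [AddCommGroup M] [Module R M] (D : Submodule R M) :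
    Order.height (⊤ : Submodule R (M ⧸ D)) ≤ Order.height (⊤ : Submodule R M) := by
  have h := Order.height_le_height_apply_of_strictMono _
    (Submodule.comapMkQOrderEmbedding D).strictMono ⊤
  have e : (Submodule.comapMkQOrderEmbedding D) ⊤ = ⊤ := by
    simp
  rwa [e] at h

lemma height_top_ne_top_of_isFiniteLength {M : Type v} [AddCommGroup M] [Module R M]
    (h : IsFiniteLength R M) : Order.height (⊤ : Submodule R M) ≠ ⊤ := by
  induction h with
  | of_subsingleton =>
    rename_i M' _ _ _
    have hmin : IsMin (⊤ : Submodule R M') := by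
      intro p _
      intro x _
      have : x = 0 := Subsingleton.elim x 0
      simp [this]
    rw [Order.height_eq_zero.mpr hmin]
    simp
  | of_simple_quotient hN ih =>
    rename_i M' _ _ N _
    -- strict mono map into product of intervals
    set ψ : Submodule R M' → {p : Submodule R M' // p ≤ N} × {p : Submodule R M' // N ≤ p} :=
      fun x => (⟨x ⊓ N, inf_le_right⟩, ⟨x ⊔ N, le_sup_right⟩) with hψ
    have hmono : StrictMono ψ := by
      intro x y hxy
      have h2 := strictMono_inf_prod_sup (z := N) hxy
      rw [Prod.lt_iff] at h2 ⊢
      rcases h2 with ⟨h1, h2⟩ | ⟨h1, h2⟩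
      · exact Or.inl ⟨Subtype.mk_lt_mk.mpr h1, Subtype.mk_le_mk.mpr h2⟩
      · exact Or.inr ⟨Subtype.mk_le_mk.mpr h1, Subtype.mk_lt_mk.mpr h2⟩
    have h1 : Order.height (⊤ : Submodule R M') ≤ Order.height (ψ ⊤) :=
      Order.height_le_height_apply_of_strictMono ψ hmono ⊤
    have hψtop : ψ ⊤ = (⟨N, le_rfl⟩, ⟨⊤, le_top⟩) := by
      simp only [hψ]
      refine Prod.ext (Subtype.ext ?_) (Subtype.ext ?_) <;> simp
    rw [hψtop] at h1
    have h2 : Order.height ((⟨N, le_rfl⟩ : {p : Submodule R M' // p ≤ N}),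
        (⟨⊤, le_top⟩ : {p : Submodule R M' // N ≤ p})) ≤
        Order.height (⟨N, le_rfl⟩ : {p : Submodule R M' // p ≤ N}) +
        Order.height (⟨⊤, le_top⟩ : {p : Submodule R M' // N ≤ p}) := height_prod_le _ _
    -- first factor
    have e1 : (Submodule.MapSubtype.orderIso N) ⊤ = ⟨N, le_rfl⟩ := by
      refine Subtype.ext ?_
      simp [Submodule.MapSubtype.orderIso]
    have h3 : Order.height (⟨N, le_rfl⟩ : {p : Submodule R M' // p ≤ N}) =
        Order.height (⊤ : Submodule R ↥N) := by
      rw [← e1]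
      exact Order.height_orderIso (Submodule.MapSubtype.orderIso N) ⊤
    -- second factor
    have e2 : (Submodule.comapMkQRelIso N) ⊤ = ⟨⊤, (le_top : N ≤ ⊤)⟩ := by
      refine Subtype.ext ?_
      simp [Submodule.comapMkQRelIso]
    have h4 : Order.height (⟨⊤, le_top⟩ : {p : Submodule R M' // N ≤ p}) =
        Order.height (⊤ : Submodule R (M' ⧸ N)) := by
      have := Order.height_orderIso (Submodule.comapMkQRelIso N) ⊤
      rw [e2] at this
      exact this
    have h5 : Order.height (⊤ : Submodule R (M' ⧸ N)) ≤ 1 := height_le_one_of_isSimpleOrder _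
    intro htop
    rw [htop] at h1
    have hle : (⊤ : ℕ∞) ≤ Order.height (⊤ : Submodule R ↥N) + 1 := by
      refine le_trans h1 (le_trans h2 ?_)
      rw [h3]
      exact add_le_add le_rfl (by rw [h4]; exact h5)
    have := top_le_iff.mp hle
    rcases WithTop.add_eq_top.mp this with h | h
    · exact ih h
    · exact WithTop.one_ne_top h

end ModuleHeight

section Main

variable {R : Type u} [Ring R]

/-- `X` contains a simple module `S` with infinite endomorphism ring such that `S ⊕ S`
embeds into `X`. -/
def HDS (R : Type u) [Ring R] (X : Type v) [AddCommGroup X] [Module R X] : Prop :=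
  ∃ S : Submodule R X, IsSimpleModule R S ∧ Infinite (Module.End R S) ∧
    ∃ T : Submodule R X, Nonempty (T ≃ₗ[R] (S × S))

/-- The conclusion of the main theorem. -/
def Concl (R : Type u) [Ring R] (M : Type v) [AddCommGroup M] [Module R M] : Prop :=
  ∃ K : Submodule R M, HDS R (M ⧸ K)

lemma infinite_end_congr {X Y : Type v} [AddCommGroup X] [Module R X] [AddCommGroup Y]
    [Module R Y] (e : X ≃ₗ[R] Y) [Infinite (Module.End R X)] : Infinite (Module.End R Y) := by
  refine Infinite.of_injective
    (fun g : Module.End R X => (e.toLinearMap ∘ₗ g ∘ₗ e.symm.toLinearMap : Module.End R Y)) ?_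
  intro g₁ g₂ h
  ext x
  have h2 := DFunLike.congr_fun h (e x)
  simp only [LinearMap.coe_comp, Function.comp_apply, LinearEquiv.coe_coe,
    LinearEquiv.symm_apply_apply] at h2
  exact e.injective h2

lemma hds_of_injective {X Y : Type v} [AddCommGroup X] [Module R X] [AddCommGroup Y] [Module R Y]
    (f : X →ₗ[R] Y) (hf : Function.Injective f) (h : HDS R X) : HDS R Y := by
  obtain ⟨S, hS, hE, T, ⟨e⟩⟩ := h
  haveI := hS
  haveI := hE
  have eS : (↥S) ≃ₗ[R] ↥(S.map f) := Submodule.equivMapOfInjective f hf S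
  have eT : (↥T) ≃ₗ[R] ↥(T.map f) := Submodule.equivMapOfInjective f hf T
  refine ⟨S.map f, ?_, ?_, T.map f, ?_⟩
  · exact IsSimpleModule.congr eS.symm
  · exact infinite_end_congr eS
  · exact ⟨eT.symm.trans (e.trans (eS.prodCongr eS))⟩

lemma concl_of_injective {X Y : Type v} [AddCommGroup X] [Module R X] [AddCommGroup Y]
    [Module R Y] (f : X →ₗ[R] Y) (hf : Function.Injective f) : Concl R X → Concl R Y := by
  rintro ⟨K, h⟩
  refine ⟨K.map f, ?_⟩
  have hle : K ≤ LinearMap.ker ((K.map f).mkQ.comp f) := by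
    intro x hx
    have hmem : f x ∈ K.map f := Submodule.mem_map_of_mem hx
    simpa [LinearMap.mem_ker, Submodule.Quotient.mk_eq_zero] using hmem
  set g : (X ⧸ K) →ₗ[R] (Y ⧸ K.map f) := K.liftQ ((K.map f).mkQ.comp f) hle with hgdef
  have hker : LinearMap.ker ((K.map f).mkQ.comp f) ≤ K := by
    rw [LinearMap.ker_comp, Submodule.ker_mkQ, Submodule.comap_map_eq_of_injective hf]
  have hg : Function.Injective g := by
    rw [← LinearMap.ker_eq_bot]
    exact Submodule.ker_liftQ_eq_bot _ _ _ hker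
  exact hds_of_injective g hg h

lemma concl_of_surjective {X Y : Type v} [AddCommGroup X] [Module R X] [AddCommGroup Y]
    [Module R Y] (f : X →ₗ[R] Y) (hf : Function.Surjective f) : Concl R Y → Concl R X := by
  rintro ⟨K, h⟩
  refine ⟨K.comap f, ?_⟩
  have hle : K.comap f ≤ LinearMap.ker (K.mkQ.comp f) := by
    intro x hx
    simpa [LinearMap.mem_ker, Submodule.Quotient.mk_eq_zero] using hx
  set g : (X ⧸ K.comap f) →ₗ[R] (Y ⧸ K) := (K.comap f).liftQ (K.mkQ.comp f) hle with hgdef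
  have hker : LinearMap.ker (K.mkQ.comp f) ≤ K.comap f := by
    rw [LinearMap.ker_comp, Submodule.ker_mkQ]
  have hginj : Function.Injective g := by
    rw [← LinearMap.ker_eq_bot]
    exact Submodule.ker_liftQ_eq_bot _ _ _ hker
  have hgsurj : Function.Surjective g := by
    rw [← LinearMap.range_eq_top, hgdef, Submodule.range_liftQ, LinearMap.range_eq_top]
    exact (Submodule.mkQ_surjective K).comp hf
  exact hds_of_injective (LinearEquiv.ofBijective g ⟨hginj, hgsurj⟩).symm.toLinearMap
    (LinearEquiv.ofBijective g ⟨hginj, hgsurj⟩).symm.injective h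

lemma finite_hom_of_simple {A B : Type v} [AddCommGroup A] [Module R A] [AddCommGroup B]
    [Module R B] [IsSimpleModule R A] [IsSimpleModule R B] [Finite (Module.End R A)] :
    Finite (A →ₗ[R] B) := by
  by_cases hex : ∃ g : A →ₗ[R] B, g ≠ 0
  · obtain ⟨g, hg⟩ := hex
    have hbij := LinearMap.bijective_of_ne_zero hg
    set e := LinearEquiv.ofBijective g hbij with he
    refine Finite.of_injective
      (fun h : A →ₗ[R] B => (e.symm.toLinearMap ∘ₗ h : Module.End R A)) ?_
    intro h₁ h₂ hh
    ext x
    have h2 := DFunLike.congr_fun hh x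
    simp only [LinearMap.coe_comp, Function.comp_apply, LinearEquiv.coe_coe] at h2
    exact e.symm.injective h2
  · push_neg at hex
    have : Subsingleton (A →ₗ[R] B) := ⟨fun h₁ h₂ => by rw [hex h₁, hex h₂]⟩
    exact Finite.of_subsingleton

lemma finite_hom_into_finite_lattice {A B : Type v} [AddCommGroup A] [Module R A]
    [AddCommGroup B] [Module R B] [IsSimpleModule R A] [Finite (Submodule R B)]
    [Finite (Module.End R A)] : Finite (A →ₗ[R] B) := by
  classical
  have hrange : ∀ f : A →ₗ[R] B,
      LinearMap.range f = ⊥ ∨ IsSimpleModule R ↥(LinearMap.range f) := by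
    intro f
    by_cases hf : f = 0
    · left; subst hf; exact LinearMap.range_zero
    · right
      exact IsSimpleModule.congr
        (LinearEquiv.ofInjective f (LinearMap.injective_of_ne_zero hf)).symm
  set ι := {T : Submodule R B // T = ⊥ ∨ IsSimpleModule R ↥T} with hι
  haveI : Finite ι := Subtype.finite
  haveI hfib : ∀ T : ι, Finite (A →ₗ[R] ↥T.1) := by
    rintro ⟨T, hT | hT⟩
    · haveI hsub : Subsingleton ↥T := by
        subst hT
        exact ⟨fun a b => Subtype.ext
          (by rw [(Submodule.mem_bot R).mp a.2, (Submodule.mem_bot R).mp b.2])⟩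
      have : Subsingleton (A →ₗ[R] ↥T) := ⟨fun h₁ h₂ => LinearMap.ext fun x => Subsingleton.elim _ _⟩
      exact Finite.of_subsingleton
    · haveI := hT
      exact finite_hom_of_simple
  set Ψ : (A →ₗ[R] B) → Σ T : ι, (A →ₗ[R] ↥T.1) :=
    fun f => ⟨⟨LinearMap.range f, hrange f⟩, f.rangeRestrict⟩ with hΨ
  have hinv : Function.LeftInverse (fun p : Σ T : ι, (A →ₗ[R] ↥T.1) => (p.1.1).subtype ∘ₗ p.2) Ψ := by
    intro f
    ext x
    rfl
  exact Finite.of_injective Ψ hinv.injective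

lemma isFiniteLength_submodule {M : Type v} [AddCommGroup M] [Module R M]
    (h : IsFiniteLength R M) (N : Submodule R M) : IsFiniteLength R ↥N := by
  obtain ⟨h1, h2⟩ := isFiniteLength_iff_isNoetherian_isArtinian.mp h
  exact isFiniteLength_iff_isNoetherian_isArtinian.mpr ⟨inferInstance, inferInstance⟩

lemma isFiniteLength_quotient {M : Type v} [AddCommGroup M] [Module R M]
    (h : IsFiniteLength R M) (D : Submodule R M) : IsFiniteLength R (M ⧸ D) := by
  obtain ⟨h1, h2⟩ := isFiniteLength_iff_isNoetherian_isArtinian.mp h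
  exact isFiniteLength_iff_isNoetherian_isArtinian.mpr ⟨inferInstance, inferInstance⟩

end Main

section Key

variable {R : Type u} [Ring R]

lemma key (c : ℕ) : ∀ (M : Type v) [AddCommGroup M] [Module R M],
    IsFiniteLength R M → Order.height (⊤ : Submodule R M) ≤ (c : ℕ∞) →
    Infinite (Submodule R M) → Concl R M := by
  induction c using Nat.strong_induction_on with
  | _ c IH =>
  intro M _ _ hlen hht hinf
  haveI := (isFiniteLength_iff_isNoetherian_isArtinian.mp hlen).1
  haveI := (isFiniteLength_iff_isNoetherian_isArtinian.mp hlen).2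
  have hctop : ((c : ℕ∞) < ⊤) := lt_top_iff_ne_top.mpr (ENat.coe_ne_top c)
  -- recursion helper
  have hrec : ∀ (X : Type v) [AddCommGroup X] [Module R X], IsFiniteLength R X →
      Order.height (⊤ : Submodule R X) < (c : ℕ∞) → Infinite (Submodule R X) → Concl R X := by
    intro X _ _ hlX hhtX hinfX
    have hne : Order.height (⊤ : Submodule R X) ≠ ⊤ := height_top_ne_top_of_isFiniteLength hlX
    lift Order.height (⊤ : Submodule R X) to ℕ using hne with d hd
    have hdc : d < c := by exact_mod_cast hhtX
    exact IH d hdc X hlX (le_of_eq hd.symm) hinfX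
  by_cases hproper : ∀ N : Submodule R M, N ≠ ⊤ → Finite (Submodule R ↥N)
  case neg =>
    push_neg at hproper
    obtain ⟨N, hNne, hNinf⟩ := hproper
    have hNfin : Order.height N < ⊤ :=
      lt_of_le_of_lt (Order.height_mono le_top) (lt_of_le_of_lt hht hctop)
    have h2 : Order.height N < Order.height (⊤ : Submodule R M) :=
      Order.height_strictMono (lt_top_iff_ne_top.mpr hNne) hNfin
    have h3 : Order.height (⊤ : Submodule R ↥N) < (c : ℕ∞) :=
      lt_of_le_of_lt (height_submodule_top_le N) (lt_of_lt_of_le h2 hht)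
    exact concl_of_injective N.subtype (Submodule.injective_subtype N)
      (hrec ↥N (isFiniteLength_submodule hlen N) h3 hNinf)
  case pos =>
  have hIicFin : ∀ N : Submodule R M, N ≠ ⊤ → {p : Submodule R M | p ≤ N}.Finite := by
    intro N hN
    haveI := hproper N hN
    have hfin : Finite {p : Submodule R M // p ≤ N} :=
      Finite.of_equiv _ (Submodule.MapSubtype.orderIso N).toEquiv
    exact @Set.toFinite _ _ hfin
  haveI : IsCoatomic (Submodule R M) := isCoatomic_of_orderTop_gt_wellFounded wellFounded_gt
  have hcoInf : {m : Submodule R M | IsCoatom m}.Infinite := by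
    by_contra hfin
    rw [Set.not_infinite] at hfin
    have huniv : (Set.univ : Set (Submodule R M)).Finite := by
      have hsub : (Set.univ : Set (Submodule R M)) ⊆
          {⊤} ∪ ⋃ m ∈ {m : Submodule R M | IsCoatom m}, {p : Submodule R M | p ≤ m} := by
        intro p _
        rcases eq_top_or_exists_le_coatom p with h | ⟨m, hm, hpm⟩
        · exact Or.inl (by simp [h])
        · exact Or.inr (Set.mem_biUnion hm hpm)
      exact Set.Finite.subset (Set.Finite.union (Set.finite_singleton _)
        (Set.Finite.biUnion hfin (fun m hm => hIicFin m hm.1))) hsub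
    exact Set.infinite_univ huniv
  obtain ⟨m₀, hm₀⟩ := hcoInf.nonempty
  have hrest : {m : Submodule R M | IsCoatom m ∧ m ≠ m₀}.Infinite := by
    have heq : {m : Submodule R M | IsCoatom m ∧ m ≠ m₀} =
        {m : Submodule R M | IsCoatom m} \ {m₀} := by
      ext m; simp [Set.mem_diff]
    rw [heq]
    exact hcoInf.diff (Set.finite_singleton m₀)
  haveI hres' : Infinite ↥{m : Submodule R M | IsCoatom m ∧ m ≠ m₀} := hrest.to_subtype
  haveI : Finite ↥{p : Submodule R M | p ≤ m₀} := (hIicFin m₀ hm₀.1).to_subtype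
  obtain ⟨⟨D, hDle₀⟩, hfib⟩ := Finite.exists_infinite_fiber
    (fun m : ↥{m : Submodule R M | IsCoatom m ∧ m ≠ m₀} =>
      (⟨m.1 ⊓ m₀, by simp⟩ : ↥{p : Submodule R M | p ≤ m₀}))
  set 𝒮 : Set (Submodule R M) := {m | IsCoatom m ∧ m ≠ m₀ ∧ m ⊓ m₀ = D} with h𝒮
  have h𝒮inf : 𝒮.Infinite := by
    have hpre := Set.infinite_coe_iff.mp hfib
    have himg := hpre.image (Set.injOn_of_injective Subtype.val_injective)
    have hsub : Subtype.val '' ((fun m : ↥{m : Submodule R M | IsCoatom m ∧ m ≠ m₀} =>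
        (⟨m.1 ⊓ m₀, by simp⟩ : ↥{p : Submodule R M | p ≤ m₀})) ⁻¹' {⟨D, hDle₀⟩}) ⊆ 𝒮 := by
      rintro m ⟨x, hx, rfl⟩
      refine ⟨x.2.1, x.2.2, ?_⟩
      simp only [Set.mem_preimage, Set.mem_singleton_iff] at hx
      exact congrArg Subtype.val hx
    exact himg.mono hsub
  have hDlem : ∀ m ∈ 𝒮, D ≤ m := fun m hm => hm.2.2 ▸ inf_le_left
  set n : Submodule R (M ⧸ D) := m₀.map D.mkQ with hn
  have hcomap : ∀ m : Submodule R M, D ≤ m → (m.map D.mkQ).comap D.mkQ = m := by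
    intro m hm
    rw [Submodule.comap_map_mkQ]
    exact sup_eq_right.mpr hm
  have hcomapinj : Function.Injective (fun p : Submodule R (M ⧸ D) => p.comap D.mkQ) :=
    Submodule.comap_injective_of_surjective (Submodule.mkQ_surjective D)
  have hcoatomsup : ∀ m ∈ 𝒮, m ⊔ m₀ = ⊤ := by
    intro m hm
    rcases lt_or_eq_of_le (le_sup_left : m ≤ m ⊔ m₀) with h | h
    · exact hm.1.2 _ h
    · exfalso
      have hm₀le : m₀ ≤ m := h ▸ le_sup_right
      rcases lt_or_eq_of_le hm₀le with h2 | h2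
      · exact hm.1.1 (hm₀.2 _ h2)
      · exact hm.2.1 h2.symm
  have hmem' : ∀ m ∈ 𝒮, IsCompl (m.map D.mkQ) n := by
    intro m hm
    constructor
    · rw [disjoint_iff]
      apply hcomapinj
      show (m.map D.mkQ ⊓ n).comap D.mkQ = (⊥ : Submodule R (M ⧸ D)).comap D.mkQ
      rw [Submodule.comap_inf, hcomap m (hDlem m hm), hcomap m₀ hDle₀, hm.2.2,
        Submodule.comap_bot, Submodule.ker_mkQ]
    · rw [codisjoint_iff, ← Submodule.map_sup, hcoatomsup m hm, Submodule.map_top,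
        Submodule.range_mkQ]
  have hne_top_n : n ≠ ⊤ := by
    intro h
    apply hm₀.1
    rw [← hcomap m₀ hDle₀]
    show n.comap D.mkQ = ⊤
    rw [h, Submodule.comap_top]
  have hn_coatom : IsCoatom n := by
    constructor
    · exact hne_top_n
    · intro P hP
      have h1 : m₀ < P.comap D.mkQ := by
        rw [← hcomap m₀ hDle₀]
        exact lt_of_le_of_ne (Submodule.comap_mono hP.le) (fun h => hP.ne (hcomapinj h))
      have h2 := hm₀.2 _ h1
      apply hcomapinj
      show P.comap D.mkQ = (⊤ : Submodule R (M ⧸ D)).comap D.mkQ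
      rw [h2, Submodule.comap_top]
  haveI hquot_simple : IsSimpleModule R ((M ⧸ D) ⧸ n) := by
    rw [isSimpleModule_iff_isCoatom]
    exact hn_coatom
  have hsimple' : ∀ m ∈ 𝒮, IsSimpleModule R ↥(m.map D.mkQ) := by
    intro m hm
    have e : ((M ⧸ D) ⧸ n) ≃ₗ[R] ↥(m.map D.mkQ) :=
      Submodule.quotientEquivOfIsCompl _ _ (hmem' m hm).symm
    exact IsSimpleModule.congr e.symm
  set 𝒮' : Set (Submodule R (M ⧸ D)) := (fun m => m.map D.mkQ) '' 𝒮 with h𝒮'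
  have h𝒮'inf : 𝒮'.Infinite := by
    refine Set.Infinite.image ?_ h𝒮inf
    intro m₁ h₁ m₂ h₂ h
    have := congrArg (fun p : Submodule R (M ⧸ D) => p.comap D.mkQ) h
    simpa [hcomap _ (hDlem _ h₁), hcomap _ (hDlem _ h₂)] using this
  have h𝒮'compl : ∀ C ∈ 𝒮', IsCompl C n := by
    rintro C ⟨m, hm, rfl⟩
    exact hmem' m hm
  have h𝒮'simple : ∀ C ∈ 𝒮', IsSimpleModule R ↥C := by
    rintro C ⟨m, hm, rfl⟩
    exact hsimple' m hm
  obtain ⟨C₁, hC₁⟩ := h𝒮'inf.nonempty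
  haveI hC₁simple : IsSimpleModule R ↥C₁ := h𝒮'simple C₁ hC₁
  have hC₁n : IsCompl C₁ n := h𝒮'compl C₁ hC₁
  set Φ : ↥𝒮' → (↥C₁ →ₗ[R] ↥n) := fun C =>
    (Submodule.projectionOnto n C.1 (h𝒮'compl C.1 C.2).symm).comp C₁.subtype with hΦ
  have hrange : ∀ C : ↥𝒮',
      LinearMap.range (C₁.subtype - n.subtype.comp (Φ C)) = C.1 := by
    intro C
    have hcompl : IsCompl n C.1 := (h𝒮'compl C.1 C.2).symm
    have h1 : LinearMap.range (C₁.subtype - n.subtype.comp (Φ C)) ≤ C.1 := by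
      rintro _ ⟨x, rfl⟩
      have hz : Submodule.projectionOnto n C.1 hcompl
          ((C₁.subtype - n.subtype.comp (Φ C)) x) = 0 := by
        simp [hΦ, Submodule.projectionOnto_apply_left, -Submodule.coe_projectionOnto_apply]
      exact (Submodule.projectionOnto_apply_eq_zero_iff hcompl).mp hz
    have h2 : LinearMap.range (C₁.subtype - n.subtype.comp (Φ C)) ≠ ⊥ := by
      intro hbot
      have hzero : C₁.subtype - n.subtype.comp (Φ C) = 0 := LinearMap.range_eq_bot.mp hbot
      have hle : C₁ ≤ n := by
        intro y hy
        have hx := DFunLike.congr_fun hzero (⟨y, hy⟩ : ↥C₁)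
        simp only [LinearMap.sub_apply, LinearMap.zero_apply, sub_eq_zero,
          LinearMap.coe_comp, Function.comp_apply] at hx
        rw [show y = C₁.subtype ⟨y, hy⟩ from rfl, hx]
        exact Submodule.coe_mem _
      have hbot' : C₁ = ⊥ := le_bot_iff.mp (hC₁n.disjoint le_rfl hle)
      exact (isSimpleModule_iff_isAtom.mp hC₁simple).1 hbot'
    rcases (isSimpleModule_iff_isAtom.mp (h𝒮'simple C.1 C.2)).le_iff.mp h1 with h | h
    · exact absurd h h2
    · exact h
  have hΦinj : Function.Injective Φ := by
    intro C C' h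
    apply Subtype.ext
    rw [← hrange C, ← hrange C', h]
  haveI : Infinite ↥𝒮' := h𝒮'inf.to_subtype
  haveI hHomInf : Infinite (↥C₁ →ₗ[R] ↥n) := Infinite.of_injective Φ hΦinj
  by_cases hnfin : Finite (Submodule R ↥n)
  case neg =>
    rw [not_finite_iff_infinite] at hnfin
    have hlen' : IsFiniteLength R ↥n := isFiniteLength_submodule (isFiniteLength_quotient hlen D) n
    have hnlt : Order.height n < ⊤ :=
      lt_of_le_of_lt (Order.height_mono le_top)
        (lt_of_le_of_lt (le_trans (height_quotient_top_le D) hht) hctop)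
    have hht' : Order.height (⊤ : Submodule R ↥n) < (c : ℕ∞) := by
      refine lt_of_le_of_lt (height_submodule_top_le n) ?_
      refine lt_of_lt_of_le (Order.height_strictMono (lt_top_iff_ne_top.mpr hne_top_n) hnlt) ?_
      exact le_trans (height_quotient_top_le D) hht
    exact concl_of_surjective D.mkQ (Submodule.mkQ_surjective D)
      (concl_of_injective n.subtype (Submodule.injective_subtype n)
        (hrec ↥n hlen' hht' hnfin))
  case pos =>
  haveI hEndInf : Infinite (Module.End R ↥C₁) := by
    rw [← not_finite_iff_infinite]
    intro hEnd
    haveI := hEnd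
    haveI : Finite (↥C₁ →ₗ[R] ↥n) := finite_hom_into_finite_lattice
    exact not_finite (↥C₁ →ₗ[R] ↥n)
  obtain ⟨f₀, hf₀⟩ := exists_ne (0 : ↥C₁ →ₗ[R] ↥n)
  set g : (↥C₁ × ↥C₁) →ₗ[R] (M ⧸ D) := LinearMap.coprod C₁.subtype (n.subtype.comp f₀) with hg
  have hginj : Function.Injective g := by
    rw [← LinearMap.ker_eq_bot, LinearMap.ker_eq_bot']
    rintro ⟨x, y⟩ hxy0
    simp only [hg, LinearMap.coprod_apply, LinearMap.coe_comp, Function.comp_apply] at hxy0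
    have hx : (x : M ⧸ D) ∈ C₁ ⊓ n := by
      refine Submodule.mem_inf.mpr ⟨Submodule.coe_mem x, ?_⟩
      have hxe : (x : M ⧸ D) = -(n.subtype (f₀ y)) := eq_neg_of_add_eq_zero_left hxy0
      rw [hxe]
      exact neg_mem (Submodule.coe_mem _)
    rw [disjoint_iff.mp hC₁n.disjoint] at hx
    have hx0 : (x : M ⧸ D) = 0 := hx
    have hxv : x = 0 := Subtype.ext hx0
    have hy0 : (n.subtype (f₀ y) : M ⧸ D) = 0 := by
      rw [hxv] at hxy0
      simpa using hxy0
    have hfy : f₀ y = 0 := Subtype.ext hy0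
    have hyv : y = 0 := by
      have hinj := LinearMap.injective_of_ne_zero hf₀
      apply hinj
      simpa using hfy
    rw [hxv, hyv]
    rfl
  exact ⟨D, C₁, hC₁simple, hEndInf, LinearMap.range g,
    ⟨(LinearEquiv.ofInjective g hginj).symm⟩⟩

end Key

/-- Let `M` be a finite-length `R`-module with infinitely many submodules. Then
there is a submodule `K ≤ M` and a simple `R`-module `S` with `End_R(S)` infinite
such that `M/K` contains a submodule isomorphic to `S ⊕ S`. -/
theorem stmt_12 {R M : Type*} [Ring R] [AddCommGroup M] [Module R M]
    (hlen : IsFiniteLength R M) (hinf : Infinite (Submodule R M)) :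
    ∃ (K : Submodule R M) (S : Submodule R (M ⧸ K)),
      IsSimpleModule R S ∧ Infinite (Module.End R S) ∧
        ∃ T : Submodule R (M ⧸ K), Nonempty (T ≃ₗ[R] (S × S)) := by
  have hne : Order.height (⊤ : Submodule R M) ≠ ⊤ := height_top_ne_top_of_isFiniteLength hlen
  obtain ⟨c, hc⟩ := WithTop.ne_top_iff_exists.mp hne
  exact key c M hlen (le_of_eq hc.symm) hinf
end

section
/- Let M be a finite-length R-module with infinitely many submodules. Then there exists a submodule N ≤ M minimal with respect to having infinitely many submodules, and this N has infinitely many maximal submodules. -/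
/-- Let `M` be a finite-length `R`-module with infinitely many submodules. Then
there is a submodule `N ≤ M` minimal with respect to having infinitely many
submodules, and such an `N` has infinitely many maximal (proper) submodules. -/

theorem stmt_13 {R M : Type*} [Ring R] [AddCommGroup M] [Module R M]
    (hlen : IsFiniteLength R M) (hinf : Infinite (Submodule R M)) :
    ∃ N : Submodule R M, Infinite (Submodule R N) ∧
      (∀ N' : Submodule R M, N' < N → Finite (Submodule R N')) ∧
      Infinite {P : Submodule R N // IsCoatom P} := by
  obtain ⟨hNoeth, hArt⟩ := isFiniteLength_iff_isNoetherian_isArtinian.mp hlen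
  -- the set of submodules with infinitely many submodules
  set S : Set (Submodule R M) := {N | Infinite (Submodule R N)} with hS
  have htop : (⊤ : Submodule R M) ∈ S := by
    have e : Submodule R (⊤ : Submodule R M) ≃o Submodule R M :=
      Submodule.orderIsoMapComap Submodule.topEquiv
    exact Infinite.of_surjective e e.surjective
  obtain ⟨N, hN, hmin⟩ := (wellFounded_lt (α := Submodule R M)).has_min S ⟨_, htop⟩
  have hfin : ∀ N' : Submodule R M, N' < N → Finite (Submodule R N') := by
    intro N' hlt
    by_contra h
    rw [not_finite_iff_infinite] at h
    exact hmin N' h hlt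
  refine ⟨N, hN, hfin, ?_⟩
  -- coatoms of Submodule R N
  by_contra hfinco
  rw [not_infinite_iff_finite] at hfinco
  have hcoat : IsCoatomic (Submodule R ↥N) :=
    isCoatomic_of_orderTop_gt_wellFounded (wellFounded_gt (α := Submodule R ↥N))
  -- each coatom has finitely many submodules below it
  have hbelow : ∀ Q : Submodule R ↥N, IsCoatom Q → Finite {P : Submodule R ↥N // P ≤ Q} := by
    intro Q hQ
    have hmap : Q.map N.subtype < N := by
      rcases lt_iff_le_and_ne.mp (lt_top_iff_ne_top.mpr hQ.1) with ⟨_, _⟩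
      refine lt_of_le_of_ne (Submodule.map_subtype_le N Q) ?_
      intro h
      apply hQ.1
      exact Submodule.map_injective_of_injective N.injective_subtype
        (h.trans (Submodule.map_subtype_top N).symm)
    have hFQ : Finite (Submodule R (Q.map N.subtype)) := hfin _ hmap
    have e : ↥Q ≃ₗ[R] ↥(Q.map N.subtype) :=
      Submodule.equivMapOfInjective N.subtype N.injective_subtype Q
    have e2 : Submodule R ↥Q ≃o Submodule R ↥(Q.map N.subtype) :=
      Submodule.orderIsoMapComap e
    have : Finite (Submodule R ↥Q) := Finite.of_equiv _ e2.symm.toEquiv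
    exact Finite.of_equiv _ (Submodule.MapSubtype.orderIso Q).toEquiv
  -- cover Submodule R N by ⊤ and the below-sets of coatoms
  have : Finite (Submodule R ↥N) := by
    have cov : (Set.univ : Set (Submodule R ↥N)) ⊆
        {⊤} ∪ ⋃ Q : {Q : Submodule R ↥N // IsCoatom Q}, {P | P ≤ Q.1} := by
      intro P _
      rcases eq_top_or_exists_le_coatom P with h | ⟨Q, hQ, hle⟩
      · exact Or.inl h
      · exact Or.inr (Set.mem_iUnion.mpr ⟨⟨Q, hQ⟩, hle⟩)
    have : ({⊤} ∪ ⋃ Q : {Q : Submodule R ↥N // IsCoatom Q}, {P | P ≤ Q.1} :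
        Set (Submodule R ↥N)).Finite := by
      apply Set.Finite.union (Set.finite_singleton _)
      apply Set.finite_iUnion
      intro Q
      exact Set.finite_coe_iff.mp (hbelow Q.1 Q.2)
    have := this.subset cov
    exact Set.finite_univ_iff.mp this
  have hinf' : Infinite (Submodule R ↥N) := hN
  exact not_finite (Submodule R ↥N)
end

section
/- All finite-length R-modules have finitely many submodules if and only if every simple R-module has a finite endomorphism ring End_R(S). -/
universe u

section Aux

variable {R : Type u} [Ring R]

private lemma fin_of_fibers {α : Type*} {β : Type*} (f : α → β) [Finite β]
    (h : ∀ b, Finite {a // f a = b}) : Finite α :=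
  Finite.of_equiv _ (Equiv.sigmaFiberEquiv f)

/-- Hom between simple modules is finite if `End S` is finite. -/
private lemma hom_simple_simple_finite {S T : Type u}
    [AddCommGroup S] [Module R S] [AddCommGroup T] [Module R T]
    [IsSimpleModule R S] [IsSimpleModule R T] [Finite (Module.End R S)] :
    Finite (T →ₗ[R] S) := by
  by_cases h : ∃ e : T →ₗ[R] S, e ≠ 0
  · obtain ⟨e, he⟩ := h
    have hb := e.bijective_of_ne_zero he
    let E : T ≃ₗ[R] S := LinearEquiv.ofBijective e hb
    refine Finite.of_injective (fun f : T →ₗ[R] S => f.comp (E.symm : S →ₗ[R] T))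
      (fun f g hfg => ?_)
    ext t
    have := congrArg (fun u : S →ₗ[R] S => u (E t)) hfg
    simpa [E] using this
  · push_neg at h
    have : Subsingleton (T →ₗ[R] S) := ⟨fun f g => by rw [h f, h g]⟩
    infer_instance

/-- Hom from a finite-length module to a simple module is finite. -/
private lemma hom_to_simple_finite
    (H : ∀ (S : Type u) [AddCommGroup S] [Module R S],
      IsSimpleModule R S → Finite (Module.End R S))
    {X : Type u} [AddCommGroup X] [Module R X] (hX : IsFiniteLength R X) :
    ∀ (S : Type u) [AddCommGroup S] [Module R S],
      IsSimpleModule R S → Finite (X →ₗ[R] S) := by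
  induction hX with
  | of_subsingleton =>
    rename_i M _ _ _
    intro S _ _ _
    have : Subsingleton (M →ₗ[R] S) :=
      ⟨fun f g => LinearMap.ext fun x => by
        rw [Subsingleton.elim x 0, map_zero, map_zero]⟩
    infer_instance
  | @of_simple_quotient M _ _ N _ hN ih =>
    intro S _ _ hS
    haveI := hS
    haveI : Finite (Module.End R S) := H S hS
    haveI : Finite (↥N →ₗ[R] S) := ih S hS
    haveI : Finite ((M ⧸ N) →ₗ[R] S) := hom_simple_simple_finite
    refine fin_of_fibers (fun f : M →ₗ[R] S => f.comp N.subtype) fun g => ?_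
    by_cases hne : Nonempty {f : M →ₗ[R] S // f.comp N.subtype = g}
    · obtain ⟨f₀, hf₀⟩ := hne
      refine Finite.of_injective (fun p : {f : M →ₗ[R] S // f.comp N.subtype = g} =>
        N.liftQ (p.1 - f₀) ?_) ?_
      · intro n hn
        have h1 : p.1 n = g ⟨n, hn⟩ := by
          have := congrArg (fun u : ↥N →ₗ[R] S => u ⟨n, hn⟩) p.2
          simpa using this
        have h2 : f₀ n = g ⟨n, hn⟩ := by
          have := congrArg (fun u : ↥N →ₗ[R] S => u ⟨n, hn⟩) hf₀
          simpa using this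
        simp [LinearMap.mem_ker, h1, h2]
      · intro p q hpq
        apply Subtype.ext
        have : p.1 - f₀ = q.1 - f₀ := by
          ext x
          have := congrArg (fun u : (M ⧸ N) →ₗ[R] S => u (N.mkQ x)) hpq
          simpa [Submodule.liftQ_apply] using this
        have := congrArg (· + f₀) this
        simpa using this
    · haveI := not_nonempty_iff.mp hne
      infer_instance

/-- Hom between finite-length modules is finite. -/
private lemma hom_finite
    (H : ∀ (S : Type u) [AddCommGroup S] [Module R S],
      IsSimpleModule R S → Finite (Module.End R S))
    {Y : Type u} [AddCommGroup Y] [Module R Y] (hY : IsFiniteLength R Y) :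
    ∀ (X : Type u) [AddCommGroup X] [Module R X],
      IsFiniteLength R X → Finite (X →ₗ[R] Y) := by
  induction hY with
  | of_subsingleton =>
    rename_i M _ _ _
    intro X _ _ _
    have : Subsingleton (X →ₗ[R] M) :=
      ⟨fun f g => LinearMap.ext fun x => Subsingleton.elim _ _⟩
    infer_instance
  | @of_simple_quotient M _ _ N hsimp hN ih =>
    intro X _ _ hX
    haveI : Finite (X →ₗ[R] (M ⧸ N)) := hom_to_simple_finite H hX (M ⧸ N) hsimp
    haveI : Finite (X →ₗ[R] ↥N) := ih X hX
    refine fin_of_fibers (fun f : X →ₗ[R] M => N.mkQ.comp f) fun g => ?_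
    by_cases hne : Nonempty {f : X →ₗ[R] M // N.mkQ.comp f = g}
    · obtain ⟨f₀, hf₀⟩ := hne
      refine Finite.of_injective (fun p : {f : X →ₗ[R] M // N.mkQ.comp f = g} =>
        LinearMap.codRestrict N (p.1 - f₀) ?_) ?_
      · intro x
        have h1 : N.mkQ (p.1 x) = g x := by
          have := congrArg (fun u : X →ₗ[R] (M ⧸ N) => u x) p.2
          simpa using this
        have h2 : N.mkQ (f₀ x) = g x := by
          have := congrArg (fun u : X →ₗ[R] (M ⧸ N) => u x) hf₀
          simpa using this
        have : N.mkQ (p.1 x - f₀ x) = 0 := by rw [map_sub, h1, h2, sub_self]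
        simpa [← Submodule.Quotient.mk_eq_zero, Submodule.mkQ_apply] using this
      · intro p q hpq
        apply Subtype.ext
        have : p.1 - f₀ = q.1 - f₀ := by
          ext x
          have := congrArg (fun u : X →ₗ[R] ↥N => (u x : M)) hpq
          simpa using this
        have := congrArg (· + f₀) this
        simpa using this
    · haveI := not_nonempty_iff.mp hne
      infer_instance

/-- The key gadget: in a fixed fiber of `P ↦ (P ⊓ N, image of P in M ⧸ N)`, each
submodule `P` yields a linear map `P₀ →ₗ M ⧸ A` that determines it. -/
private lemma exists_compl_map {M : Type u} [AddCommGroup M] [Module R M]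
    (N A P₀ P : Submodule R M) (hA : P ⊓ N = A)
    (hB : P.map N.mkQ = P₀.map N.mkQ) :
    ∃ ψ : ↥P₀ →ₗ[R] M ⧸ A, ∀ (x₀ : ↥P₀) (x : M), x ∈ P →
      N.mkQ x = N.mkQ (x₀ : M) → ψ x₀ = A.mkQ x - A.mkQ (x₀ : M) := by
  have hAN : A ≤ N := hA ▸ inf_le_right
  set v : (M ⧸ A) →ₗ[R] M ⧸ N := A.liftQ N.mkQ (by rwa [Submodule.ker_mkQ]) with hv
  have hvmk : ∀ x : M, v (A.mkQ x) = N.mkQ x := fun x => by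
    simp [hv, Submodule.mkQ_apply, Submodule.liftQ_apply]
  set P' : Submodule R (M ⧸ A) := P.map A.mkQ with hP'
  set f : ↥P' →ₗ[R] M ⧸ N := v.domRestrict P' with hf
  have finj : Function.Injective f := by
    rw [← LinearMap.ker_eq_bot]
    rw [Submodule.eq_bot_iff]
    rintro ⟨z, hz⟩ h0
    obtain ⟨x, hx, rfl⟩ := hz
    have hxN : x ∈ N := by
      have : N.mkQ x = 0 := by
        have : f ⟨A.mkQ x, Submodule.mem_map_of_mem hx⟩ = 0 := h0
        rwa [hf, LinearMap.domRestrict_apply, hvmk] at this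
      rwa [Submodule.mkQ_apply, Submodule.Quotient.mk_eq_zero] at this
    have hxA : x ∈ A := hA ▸ ⟨hx, hxN⟩
    exact Subtype.ext (by simpa [Submodule.Quotient.mk_eq_zero] using hxA)
  let e : ↥P' ≃ₗ[R] ↥(LinearMap.range f) := LinearEquiv.ofInjective f finj
  set q : ↥P₀ →ₗ[R] M ⧸ N := N.mkQ.comp P₀.subtype with hq
  have hmem : ∀ x₀ : ↥P₀, q x₀ ∈ LinearMap.range f := by
    intro x₀
    have h1 : N.mkQ (x₀ : M) ∈ P.map N.mkQ := by
      rw [hB]; exact Submodule.mem_map_of_mem x₀.2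
    obtain ⟨x, hx, hxeq⟩ := h1
    refine ⟨⟨A.mkQ x, Submodule.mem_map_of_mem hx⟩, ?_⟩
    rw [hf, LinearMap.domRestrict_apply, hvmk, hxeq]
    simp [hq]
  refine ⟨(P'.subtype.comp ((e.symm : ↥(LinearMap.range f) →ₗ[R] ↥P').comp
      (q.codRestrict (LinearMap.range f) hmem))) - (A.mkQ.comp P₀.subtype),
    fun x₀ x hx hmk => ?_⟩
  have key : e.symm ⟨q x₀, hmem x₀⟩ = ⟨A.mkQ x, Submodule.mem_map_of_mem hx⟩ := by
    rw [LinearEquiv.symm_apply_eq]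
    apply Subtype.ext
    rw [LinearEquiv.ofInjective_apply]
    show q x₀ = f ⟨A.mkQ x, Submodule.mem_map_of_mem hx⟩
    rw [hf, LinearMap.domRestrict_apply, hvmk, hmk]
    rfl
  have hcod : (LinearMap.codRestrict (LinearMap.range f) q hmem) x₀ = ⟨q x₀, hmem x₀⟩ := rfl
  simp only [LinearMap.sub_apply, LinearMap.comp_apply, LinearEquiv.coe_coe]
  rw [hcod, key]
  rfl

/-- Backward direction: finite endo rings of simples imply finitely many submodules. -/
private lemma submodules_finite
    (H : ∀ (S : Type u) [AddCommGroup S] [Module R S],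
      IsSimpleModule R S → Finite (Module.End R S))
    {M : Type u} [AddCommGroup M] [Module R M] (hM : IsFiniteLength R M) :
    Finite (Submodule R M) := by
  induction hM with
  | of_subsingleton =>
    rename_i M _ _ _
    have : Subsingleton (Submodule R M) :=
      ⟨fun P Q => by
        ext x; simp [Subsingleton.elim x 0]⟩
    infer_instance
  | @of_simple_quotient M _ _ N hsimp hN ih =>
    have hMfl : IsFiniteLength R M := .of_simple_quotient hN
    haveI hNoeth : IsNoetherian R M := (isFiniteLength_iff_isNoetherian_isArtinian.mp hMfl).1
    haveI hArt : IsArtinian R M := (isFiniteLength_iff_isNoetherian_isArtinian.mp hMfl).2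
    haveI : Finite (Submodule R ↥N) := ih
    haveI : Finite (Submodule R (M ⧸ N)) := by
      refine Finite.of_surjective (fun b : Bool => cond b ⊤ ⊥) fun P => ?_
      rcases eq_bot_or_eq_top P with h | h
      · exact ⟨false, h.symm⟩
      · exact ⟨true, h.symm⟩
    refine fin_of_fibers
      (fun P : Submodule R M => (P.comap N.subtype, P.map N.mkQ)) fun b => ?_
    by_cases hne : Nonempty {P : Submodule R M //
        (P.comap N.subtype, P.map N.mkQ) = b}
    · obtain ⟨P₀, hP₀⟩ := hne
      -- the common intersection with N, as a submodule of M
      set A : Submodule R M := P₀ ⊓ N with hAdef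
      have hfib : ∀ P : Submodule R M, (P.comap N.subtype, P.map N.mkQ) = b →
          P ⊓ N = A ∧ P.map N.mkQ = P₀.map N.mkQ := by
        intro P hP
        have hpair := hP.trans hP₀.symm
        have h1 : P.comap N.subtype = P₀.comap N.subtype := congrArg Prod.fst hpair
        have h2 : P.map N.mkQ = P₀.map N.mkQ := congrArg Prod.snd hpair
        refine ⟨?_, h2⟩
        have hm : Submodule.map N.subtype (P.comap N.subtype)
            = Submodule.map N.subtype (P₀.comap N.subtype) := by rw [h1]
        rw [Submodule.map_comap_subtype, Submodule.map_comap_subtype] at hm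
        rw [hAdef, inf_comm P N, inf_comm P₀ N]
        exact hm
      have hAP : ∀ P : Submodule R M, (P.comap N.subtype, P.map N.mkQ) = b → A ≤ P := by
        intro P hP
        rw [← (hfib P hP).1]
        exact inf_le_left
      haveI : Finite (↥P₀ →ₗ[R] M ⧸ A) := by
        have h1 : IsFiniteLength R ↥P₀ :=
          isFiniteLength_iff_isNoetherian_isArtinian.mpr ⟨inferInstance, inferInstance⟩
        have h2 : IsFiniteLength R (M ⧸ A) :=
          isFiniteLength_iff_isNoetherian_isArtinian.mpr ⟨inferInstance, inferInstance⟩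
        exact hom_finite H h2 ↥P₀ h1
      set Ψ : {P : Submodule R M // (P.comap N.subtype, P.map N.mkQ) = b} →
          (↥P₀ →ₗ[R] M ⧸ A) := fun p =>
        (exists_compl_map N A P₀ p.1 (hfib p.1 p.2).1 (hfib p.1 p.2).2).choose with hΨ
      have hspec : ∀ p (x₀ : ↥P₀) (x : M), x ∈ p.1 →
          N.mkQ x = N.mkQ (x₀ : M) → Ψ p x₀ = A.mkQ x - A.mkQ (x₀ : M) :=
        fun p =>
          (exists_compl_map N A P₀ p.1 (hfib p.1 p.2).1 (hfib p.1 p.2).2).choose_spec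
      refine Finite.of_injective Ψ fun p q hpq => ?_
      have main : ∀ p q : {P : Submodule R M // (P.comap N.subtype, P.map N.mkQ) = b},
          Ψ p = Ψ q → p.1 ≤ q.1 := by
        intro p q hpq x hx
        -- find x₀ ∈ P₀ with same image in M ⧸ N
        have h1 : N.mkQ x ∈ P₀.map N.mkQ := by
          rw [← (hfib p.1 p.2).2]; exact Submodule.mem_map_of_mem hx
        obtain ⟨x₀, hx₀, hx₀eq⟩ := h1
        -- find y ∈ q.1 with same image
        have h2 : N.mkQ (x₀ : M) ∈ q.1.map N.mkQ := by
          rw [(hfib q.1 q.2).2]; exact Submodule.mem_map_of_mem hx₀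
        obtain ⟨y, hy, hyeq⟩ := h2
        have e1 : Ψ p ⟨x₀, hx₀⟩ = A.mkQ x - A.mkQ x₀ :=
          hspec p ⟨x₀, hx₀⟩ x hx hx₀eq.symm
        have e2 : Ψ q ⟨x₀, hx₀⟩ = A.mkQ y - A.mkQ x₀ :=
          hspec q ⟨x₀, hx₀⟩ y hy hyeq
        have : A.mkQ x = A.mkQ y := by
          have := congrArg (fun u : ↥P₀ →ₗ[R] M ⧸ A => u ⟨x₀, hx₀⟩) hpq
          rw [e1, e2] at this
          exact sub_left_injective this
        have hxy : x - y ∈ A := by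
          rwa [Submodule.mkQ_apply, Submodule.mkQ_apply, Submodule.Quotient.eq] at this
        have : x - y ∈ q.1 := hAP q.1 q.2 hxy
        simpa using add_mem this hy
      exact Subtype.ext (le_antisymm (main p q hpq) (main q p hpq.symm))
    · haveI := not_nonempty_iff.mp hne
      infer_instance

end Aux

/-- All finite-length `R`-modules have finitely many submodules if and only if
every simple `R`-module has a finite endomorphism ring. -/
theorem stmt_14 {R : Type u} [Ring R] :
    (∀ (M : Type u) [AddCommGroup M] [Module R M],
        IsFiniteLength R M → Finite (Submodule R M)) ↔
      (∀ (S : Type u) [AddCommGroup S] [Module R S],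
        IsSimpleModule R S → Finite (Module.End R S)) := by
  constructor
  · intro h S _ _ hS
    haveI := hS
    -- S has finite length
    have hSfl : IsFiniteLength R S := by
      haveI : IsSimpleModule R (S ⧸ (⊥ : Submodule R S)) :=
        IsSimpleModule.congr ((⊥ : Submodule R S).quotEquivOfEqBot rfl)
      exact .of_simple_quotient (N := (⊥ : Submodule R S)) (.of_subsingleton)
    haveI : IsNoetherian R S := (isFiniteLength_iff_isNoetherian_isArtinian.mp hSfl).1
    haveI : IsArtinian R S := (isFiniteLength_iff_isNoetherian_isArtinian.mp hSfl).2
    have hSS : IsFiniteLength R (S × S) :=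
      isFiniteLength_iff_isNoetherian_isArtinian.mpr ⟨inferInstance, inferInstance⟩
    haveI : Finite (Submodule R (S × S)) := h (S × S) hSS
    refine Finite.of_injective (fun f : Module.End R S => f.graph) fun f g hfg => ?_
    have hfg' : f.graph = g.graph := hfg
    ext x
    have hx : (x, f x) ∈ g.graph := by
      rw [← hfg']
      exact (f.mem_graph_iff _).mpr rfl
    exact (g.mem_graph_iff _).mp hx
  · intro H M _ _ hM
    exact submodules_finite H hM
end

section
/- Let M be a nonzero R-module with finitely many submodules. If M is not semisimple, then μ_R(M) = 0. -/
open Finset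

/-- Weisner-type lemma: if `μ` satisfies the Möbius recursion in a finite complete
lattice, then for any `a ≠ ⊥` and any `y`, the sum of `μ x` over `x` with `x ⊔ a = y`
vanishes. -/
private lemma weisner_aux {α : Type*} [CompleteLattice α] [Fintype α] [DecidableEq α]
    [WellFoundedLT α]
    [DecidableRel ((· ≤ ·) : α → α → Prop)] (μ : α → ℤ)
    (hrec : ∀ N : α, N ≠ ⊥ → ∑ x ∈ univ.filter (fun x => x ≤ N), μ x = 0)
    (a : α) (ha : a ≠ ⊥) :
    ∀ y : α, ∑ x ∈ univ.filter (fun x => x ⊔ a = y), μ x = 0 := by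
  intro y
  induction y using WellFoundedLT.induction with
  | ind y IH =>
  have hT : ∑ x ∈ univ.filter (fun x => x ⊔ a ≤ y), μ x = 0 := by
    by_cases hay : a ≤ y
    · have hfe : univ.filter (fun x : α => x ⊔ a ≤ y) = univ.filter (fun x => x ≤ y) := by
        ext x; simp [sup_le_iff, hay]
      rw [hfe]
      refine hrec y fun h => ha (le_bot_iff.mp (h ▸ hay))
    · have hfe : univ.filter (fun x : α => x ⊔ a ≤ y) = ∅ := by
        ext x
        simp only [mem_filter, mem_univ, true_and, notMem_empty, iff_false]
        exact fun h => hay (le_trans le_sup_right h)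
      rw [hfe]; simp
  have hgroup : ∑ y' ∈ univ.filter (fun y' => y' ≤ y),
      ∑ x ∈ (univ.filter (fun x => x ⊔ a ≤ y)).filter (fun x => x ⊔ a = y'), μ x
      = ∑ x ∈ univ.filter (fun x => x ⊔ a ≤ y), μ x := by
    refine Finset.sum_fiberwise_of_maps_to (fun x hx => ?_) _
    simp only [mem_filter, mem_univ, true_and] at hx ⊢
    exact hx
  have hfib : ∀ y' ∈ univ.filter (fun y' : α => y' ≤ y),
      (univ.filter (fun x => x ⊔ a ≤ y)).filter (fun x => x ⊔ a = y')
        = univ.filter (fun x => x ⊔ a = y') := by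
    intro y' hy'
    simp only [mem_filter, mem_univ, true_and] at hy'
    ext x
    simp only [mem_filter, mem_univ, true_and]
    exact ⟨fun h => h.2, fun h => ⟨h ▸ hy', h⟩⟩
  rw [hT, Finset.sum_congr rfl (fun y' hy' => by rw [hfib y' hy'])] at hgroup
  have hy_mem : y ∈ univ.filter (fun y' : α => y' ≤ y) := by simp
  have hzero : ∀ y' ∈ univ.filter (fun y' : α => y' ≤ y), y' ≠ y →
      ∑ x ∈ univ.filter (fun x => x ⊔ a = y'), μ x = 0 := by
    intro y' hy' hne
    simp only [mem_filter, mem_univ, true_and] at hy'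
    exact IH y' (lt_of_le_of_ne hy' hne)
  rw [Finset.sum_eq_single_of_mem y hy_mem hzero] at hgroup
  exact hgroup

/-- Let `M` be a nonzero `R`-module with finitely many submodules, and let `μ` be
the Möbius function of the submodule lattice, i.e. the (unique) function with
`μ ⊥ = 1` and `∑_{N' ≤ N} μ N' = 0` for every nonzero submodule `N`.
If `M` is not semisimple then `μ_R(M) = μ ⊤ = 0`. -/
theorem stmt_15 {R M : Type*} [Ring R] [AddCommGroup M] [Module R M]
    [Nontrivial M] [Finite (Submodule R M)]
    (μ : Submodule R M → ℤ) (hbot : μ ⊥ = 1)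
    (hrec : ∀ N : Submodule R M, N ≠ ⊥ → ∑ᶠ N' ∈ {N' : Submodule R M | N' ≤ N}, μ N' = 0)
    (hns : ¬ IsSemisimpleModule R M) :
    μ ⊤ = 0 := by
  classical
  cases nonempty_fintype (Submodule R M)
  -- convert the recursion to a `Finset` sum
  have hrec' : ∀ N : Submodule R M, N ≠ ⊥ →
      ∑ x ∈ univ.filter (fun x => x ≤ N), μ x = 0 := by
    intro N hN
    have h := hrec N hN
    rwa [show {N' : Submodule R M | N' ≤ N}
        = ↑(univ.filter (fun x : Submodule R M => x ≤ N)) by ext; simp,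
      finsum_mem_coe_finset] at h
  -- the radical (infimum of coatoms) is nonzero since `M` is not semisimple
  set a := sInf {c : Submodule R M | IsCoatom c} with ha_def
  have ha : a ≠ ⊥ := by
    intro h
    apply hns
    have h2 : sSup {x : (Submodule R M)ᵒᵈ | IsAtom x} = ⊤ := by
      apply OrderDual.ofDual.injective
      rw [ofDual_sSup]
      have : OrderDual.toDual ⁻¹' {x : (Submodule R M)ᵒᵈ | IsAtom x}
          = {c : Submodule R M | IsCoatom c} := by
        ext c; exact isAtom_dual_iff_isCoatom
      rw [this, ← ha_def, h]; rfl
    haveI : IsCompactlyGenerated (Submodule R M)ᵒᵈ :=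
      CompleteLattice.isCompactlyGenerated_of_wellFoundedGT
    haveI hcd : ComplementedLattice (Submodule R M)ᵒᵈ :=
      complementedLattice_of_sSup_atoms_eq_top h2
    refine { toComplementedLattice := ⟨fun b => ?_⟩ }
    obtain ⟨c, hc⟩ := ComplementedLattice.exists_isCompl (OrderDual.toDual b)
    exact ⟨OrderDual.ofDual c, hc.dual⟩
  -- every proper submodule is below a coatom
  haveI : IsCoatomic (Submodule R M) :=
    isCoatomic_of_orderTop_gt_wellFounded wellFounded_gt
  have hfilter : univ.filter (fun x : Submodule R M => x ⊔ a = ⊤) = {⊤} := by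
    ext x
    simp only [mem_filter, mem_univ, true_and, mem_singleton]
    constructor
    · intro hx
      rcases eq_top_or_exists_le_coatom x with h | ⟨c, hc, hxc⟩
      · exact h
      · exfalso
        have hac : a ≤ c := sInf_le hc
        have : (⊤ : Submodule R M) ≤ c := hx ▸ sup_le hxc hac
        exact hc.1 (top_le_iff.mp this)
    · rintro rfl; simp
  have hW := weisner_aux μ hrec' a ha ⊤
  rw [hfilter, Finset.sum_singleton] at hW
  exact hW
end

section
/- Let S be a simple R-module with |End_R(S)| = q finite and t ≥ 1, and fix a simple submodule T ≤ S^t. Then exactly 1 + q + ... + q^{t-2} of the maximal submodules of S^t contain T, and exactly q^{t-1} maximal submodules do not contain T. -/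
open LinearMap

section Aux

private lemma aux_geom (q : ℕ) (hq : 1 ≤ q) (k : ℕ) :
    (∑ i ∈ Finset.range k, q ^ i) * (q - 1) = q ^ k - 1 := by
  induction k with
  | zero => simp
  | succ n ih =>
    rw [Finset.sum_range_succ, add_mul, ih, pow_succ, Nat.mul_sub_one]
    have h1 : 1 ≤ q ^ n := Nat.one_le_pow _ _ hq
    have h2 : q ^ n ≤ q ^ n * q := Nat.le_mul_of_pos_right _ hq
    set x := q ^ n
    set y := x * q with hy
    omega

private lemma aux_card_ne_zero {G : Type*} [Zero G] [Finite G] :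
    Nat.card {x : G // x ≠ 0} = Nat.card G - 1 := by
  classical
  have h := Nat.card_congr (Equiv.sumCompl (· ≠ (0 : G)))
  rw [Nat.card_sum] at h
  haveI : Subsingleton {x : G // ¬ x ≠ 0} :=
    ⟨fun a b => Subtype.ext ((not_not.1 a.2).trans (not_not.1 b.2).symm)⟩
  haveI : Nonempty {x : G // ¬ x ≠ 0} := ⟨⟨0, not_not.2 rfl⟩⟩
  rw [show Nat.card {x : G // ¬ x ≠ 0} = 1 from Nat.card_unique] at h
  omega

variable {R S : Type*} [Ring R] [AddCommGroup S] [Module R S] [IsSimpleModule R S] {t : ℕ}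

private lemma aux_semisimple : IsSemisimpleModule R (Fin t → S) := by
  classical
  haveI : IsSemisimpleModule R S := inferInstance
  apply isSemisimpleModule_of_isSemisimpleModule_submodule'
    (p := fun i : Fin t => LinearMap.range (LinearMap.single R (fun _ : Fin t => S) i))
  · intro i
    have hinj : Function.Injective (LinearMap.single R (fun _ : Fin t => S) i) := by
      rw [LinearMap.coe_single]
      exact Pi.single_injective i
    exact IsSemisimpleModule.congr (LinearEquiv.ofInjective _ hinj).symm
  · exact LinearMap.iSup_range_single R _

private lemma aux_quot_equiv {P : Submodule R (Fin t → S)} (hP : IsCoatom P) :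
    Nonempty (((Fin t → S) ⧸ P) ≃ₗ[R] S) := by
  classical
  haveI hsimple : IsSimpleModule R ((Fin t → S) ⧸ P) := isSimpleModule_iff_isCoatom.mpr hP
  have hex : ∃ i : Fin t, P.mkQ.comp (LinearMap.single R (fun _ : Fin t => S) i) ≠ 0 := by
    by_contra h
    push_neg at h
    apply hP.1
    rw [eq_top_iff]
    intro x _
    have hx : P.mkQ x = 0 := by
      have hxs : x = ∑ i : Fin t, Pi.single i (x i) := (Finset.univ_sum_single x).symm
      rw [hxs, map_sum]
      refine Finset.sum_eq_zero fun i _ => ?_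
      have := LinearMap.congr_fun (h i) (x i)
      simpa using this
    rwa [← LinearMap.mem_ker, Submodule.ker_mkQ] at hx
  obtain ⟨i, hi⟩ := hex
  exact ⟨(LinearEquiv.ofBijective _ (LinearMap.bijective_of_ne_zero hi)).symm⟩

private noncomputable def auxFiberEquiv {P : Submodule R (Fin t → S)} (hP : IsCoatom P)
    (e : ((Fin t → S) ⧸ P) ≃ₗ[R] S) :
    (Module.End R S)ˣ ≃ {f : (Fin t → S) →ₗ[R] S // LinearMap.ker f = P} := by
  have hker : ∀ u : (Module.End R S)ˣ,
      LinearMap.ker ((u : Module.End R S) ∘ₗ (e.toLinearMap ∘ₗ P.mkQ)) = P := by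
    intro u
    have hu : Function.Injective (u : Module.End R S) :=
      Function.LeftInverse.injective (g := ((u⁻¹ : (Module.End R S)ˣ) : Module.End R S))
        fun x => by rw [← Module.End.mul_apply, u.inv_mul, Module.End.one_apply]
    rw [LinearMap.ker_comp, LinearMap.ker_eq_bot.2 hu, Submodule.comap_bot,
      LinearMap.ker_comp, LinearEquiv.ker, Submodule.comap_bot, Submodule.ker_mkQ]
  refine Equiv.ofBijective
    (fun u => ⟨(u : Module.End R S) ∘ₗ (e.toLinearMap ∘ₗ P.mkQ), hker u⟩) ⟨?_, ?_⟩
  · intro u v huv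
    have h1 : (u : Module.End R S) ∘ₗ (e.toLinearMap ∘ₗ P.mkQ)
        = (v : Module.End R S) ∘ₗ (e.toLinearMap ∘ₗ P.mkQ) := congrArg Subtype.val huv
    apply Units.ext
    apply LinearMap.ext
    intro s
    obtain ⟨y, rfl⟩ := e.surjective s
    obtain ⟨x, rfl⟩ := P.mkQ_surjective y
    exact LinearMap.congr_fun h1 x
  · rintro ⟨g, hg⟩
    have hg0 : g ≠ 0 := fun h0 => hP.1 (by rw [← hg, h0, LinearMap.ker_zero])
    have hgs : Function.Surjective g := LinearMap.surjective_of_ne_zero hg0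
    have hle : P ≤ LinearMap.ker g := hg.ge
    have hcomp : (P.liftQ g hle) ∘ₗ P.mkQ = g := P.liftQ_mkQ g hle
    have hinj : Function.Injective (P.liftQ g hle) := by
      rw [← LinearMap.ker_eq_bot]
      exact Submodule.ker_liftQ_eq_bot _ _ _ hg.le
    have hsurj : Function.Surjective (P.liftQ g hle) := by
      intro s
      obtain ⟨x, hx⟩ := hgs s
      exact ⟨P.mkQ x, by rw [← hcomp] at hx; exact hx⟩
    let E : ((Fin t → S) ⧸ P) ≃ₗ[R] S := LinearEquiv.ofBijective _ ⟨hinj, hsurj⟩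
    let w : S ≃ₗ[R] S := e.symm.trans E
    refine ⟨⟨w.toLinearMap, w.symm.toLinearMap, ?_, ?_⟩, ?_⟩
    · apply LinearMap.ext; intro s
      simp [Module.End.mul_apply]
    · apply LinearMap.ext; intro s
      simp [Module.End.mul_apply]
    · apply Subtype.ext
      apply LinearMap.ext
      intro x
      show w (e (P.mkQ x)) = g x
      rw [← hcomp]
      show w (e (P.mkQ x)) = (P.liftQ g hle) (P.mkQ x)
      simp [w, E, LinearEquiv.ofBijective_apply]
      rfl

private lemma aux_key (c : Submodule R (Fin t → S) → Prop) :
    Nat.card {f : (Fin t → S) →ₗ[R] S // f ≠ 0 ∧ c (LinearMap.ker f)} =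
      Nat.card {P : Submodule R (Fin t → S) // IsCoatom P ∧ c P}
        * Nat.card (Module.End R S)ˣ := by
  have hco : ∀ f : {f : (Fin t → S) →ₗ[R] S // f ≠ 0 ∧ c (LinearMap.ker f)},
      IsCoatom (LinearMap.ker f.1) := fun f =>
    LinearMap.isCoatom_ker_of_surjective (LinearMap.surjective_of_ne_zero f.2.1)
  let F : {f : (Fin t → S) →ₗ[R] S // f ≠ 0 ∧ c (LinearMap.ker f)} →
      {P : Submodule R (Fin t → S) // IsCoatom P ∧ c P} :=
    fun f => ⟨LinearMap.ker f.1, hco f, f.2.2⟩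
  have e2 : ∀ P : {P : Submodule R (Fin t → S) // IsCoatom P ∧ c P},
      {f : {f : (Fin t → S) →ₗ[R] S // f ≠ 0 ∧ c (LinearMap.ker f)} // F f = P} ≃
        {g : (Fin t → S) →ₗ[R] S // LinearMap.ker g = P.1} := by
    intro P
    refine ⟨fun f => ⟨f.1.1, congrArg Subtype.val f.2⟩,
      fun g => ⟨⟨g.1, ?_, ?_⟩, Subtype.ext g.2⟩, fun _ => rfl, fun _ => rfl⟩
    · intro h0
      exact P.2.1.1 (by rw [← g.2, h0, LinearMap.ker_zero])
    · rw [g.2]; exact P.2.2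
  have e3 : ∀ P : {P : Submodule R (Fin t → S) // IsCoatom P ∧ c P},
      {g : (Fin t → S) →ₗ[R] S // LinearMap.ker g = P.1} ≃ (Module.End R S)ˣ :=
    fun P => (auxFiberEquiv P.2.1 (aux_quot_equiv P.2.1).some).symm
  calc Nat.card {f : (Fin t → S) →ₗ[R] S // f ≠ 0 ∧ c (LinearMap.ker f)}
      = Nat.card ({P : Submodule R (Fin t → S) // IsCoatom P ∧ c P} × (Module.End R S)ˣ) :=
        Nat.card_congr (((Equiv.sigmaFiberEquiv F).symm.trans
          (Equiv.sigmaCongrRight fun P => (e2 P).trans (e3 P))).trans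
          (Equiv.sigmaEquivProd _ _))
    _ = _ := Nat.card_prod _ _

end Aux

/-- Let `S` be a simple `R`-module with `|End_R(S)| = q` finite, `t ≥ 1`, and `T` a
simple submodule of `S^t`. Then exactly `1 + q + ⋯ + q^{t-2}` maximal submodules of
`S^t` contain `T`, and exactly `q^{t-1}` maximal submodules do not contain `T`. -/
theorem stmt_17 {R S : Type*} [Ring R] [AddCommGroup S] [Module R S]
    [IsSimpleModule R S] [Finite (Module.End R S)] (q t : ℕ)
    (hq : Nat.card (Module.End R S) = q) (ht : 1 ≤ t)
    (T : Submodule R (Fin t → S)) (hT : IsSimpleModule R T) :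
    Nat.card {P : Submodule R (Fin t → S) // IsCoatom P ∧ T ≤ P} =
      ∑ i ∈ Finset.range (t - 1), q ^ i ∧
    Nat.card {P : Submodule R (Fin t → S) // IsCoatom P ∧ ¬ T ≤ P} = q ^ (t - 1) := by
  classical
  haveI : Finite (S →ₗ[R] S) := ‹Finite (Module.End R S)›
  haveI : IsSemisimpleModule R (Fin t → S) := aux_semisimple
  haveI : Finite ((Fin t → S) →ₗ[R] S) :=
    Finite.of_equiv _ (LinearMap.lsum R (fun _ : Fin t => S) ℕ).toEquiv
  have hq2 : 2 ≤ q := by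
    rw [← hq]; exact Finite.one_lt_card
  have hcard_units : Nat.card (Module.End R S)ˣ = q - 1 := by
    rw [Nat.card_units, hq]
  have hHom : Nat.card ((Fin t → S) →ₗ[R] S) = q ^ t := by
    rw [Nat.card_congr (LinearMap.lsum R (fun _ : Fin t => S) ℕ).toEquiv.symm, Nat.card_fun]
    have hfin : Nat.card (Fin t) = t := by simp
    have hqS : Nat.card (S →ₗ[R] S) = q := hq
    rw [hfin, hqS]
  -- the restriction homomorphism
  let ρ : ((Fin t → S) →ₗ[R] S) →+ (T →ₗ[R] S) :=
    { toFun := fun f => f.comp T.subtype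
      map_zero' := rfl
      map_add' := fun f g => LinearMap.add_comp _ _ _ }
  have hρsurj : Function.Surjective ρ := by
    intro g
    obtain ⟨C, hC⟩ := exists_isCompl T
    refine ⟨g ∘ₗ (T.projectionOnto C hC), ?_⟩
    show (g ∘ₗ (T.projectionOnto C hC)).comp T.subtype = g
    rw [LinearMap.comp_assoc, Submodule.projectionOnto_comp_subtype, LinearMap.comp_id]
  -- |Hom(T,S)| = q
  have hTS : Nat.card (T →ₗ[R] S) = q := by
    haveI := hT
    haveI : Nontrivial T := IsSimpleModule.nontrivial R T
    have hex : ∃ i : Fin t,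
        (LinearMap.proj i : (Fin t → S) →ₗ[R] S) ∘ₗ T.subtype ≠ 0 := by
      by_contra hc
      push_neg at hc
      obtain ⟨x, hx⟩ := exists_ne (0 : T)
      apply hx
      apply Subtype.ext
      funext i
      exact LinearMap.congr_fun (hc i) x
    obtain ⟨i, hi⟩ := hex
    let eT : T ≃ₗ[R] S := LinearEquiv.ofBijective _ (LinearMap.bijective_of_ne_zero hi)
    have eqv : (T →ₗ[R] S) ≃ (S →ₗ[R] S) :=
      ⟨fun f => f ∘ₗ eT.symm.toLinearMap, fun g => g ∘ₗ eT.toLinearMap,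
        fun f => by apply LinearMap.ext; intro x; simp,
        fun g => by apply LinearMap.ext; intro x; simp⟩
    rw [Nat.card_congr eqv]
    exact hq
  -- |ker ρ| = q^(t-1)
  have hker_card : Nat.card ρ.ker = q ^ (t - 1) := by
    have h1 := AddSubgroup.card_eq_card_quotient_mul_card_addSubgroup ρ.ker
    rw [Nat.card_congr (QuotientAddGroup.quotientKerEquivOfSurjective ρ hρsurj).toEquiv] at h1
    rw [hHom, hTS] at h1
    have hqpos : 0 < q := by omega
    have h2 : q ^ t = q * q ^ (t - 1) := by
      rw [← pow_succ']
      congr 1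
      omega
    exact Nat.eq_of_mul_eq_mul_left hqpos (h1.symm.trans h2)
  -- membership in ker ρ
  have hmem : ∀ f : (Fin t → S) →ₗ[R] S, f ∈ ρ.ker ↔ T ≤ LinearMap.ker f := by
    intro f
    rw [AddMonoidHom.mem_ker]
    show f.comp T.subtype = 0 ↔ _
    constructor
    · intro h x hx
      have := LinearMap.congr_fun h ⟨x, hx⟩
      simpa using this
    · intro h
      apply LinearMap.ext
      intro x
      simpa using h x.2
  -- counts of nonzero functionals
  have hA : Nat.card {f : (Fin t → S) →ₗ[R] S // f ≠ 0 ∧ T ≤ LinearMap.ker f}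
      = q ^ (t - 1) - 1 := by
    have e : {f : (Fin t → S) →ₗ[R] S // f ≠ 0 ∧ T ≤ LinearMap.ker f} ≃
        {x : ρ.ker // x ≠ 0} :=
      ⟨fun f => ⟨⟨f.1, (hmem f.1).2 f.2.2⟩,
          fun h0 => f.2.1 (by simpa using congrArg Subtype.val h0)⟩,
        fun x => ⟨x.1.1, fun h0 => x.2 (Subtype.ext h0), (hmem x.1.1).1 x.1.2⟩,
        fun _ => rfl, fun _ => rfl⟩
    rw [Nat.card_congr e, aux_card_ne_zero, hker_card]
  have hB : Nat.card {f : (Fin t → S) →ₗ[R] S // f ≠ 0 ∧ ¬ T ≤ LinearMap.ker f}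
      = q ^ t - q ^ (t - 1) := by
    have e : {f : (Fin t → S) →ₗ[R] S // f ≠ 0 ∧ ¬ T ≤ LinearMap.ker f} ≃
        {f : (Fin t → S) →ₗ[R] S // f ∉ ρ.ker} :=
      ⟨fun f => ⟨f.1, fun hm => f.2.2 ((hmem f.1).1 hm)⟩,
        fun f => ⟨f.1, fun h0 => f.2 (by rw [h0]; exact zero_mem _),
          fun hle => f.2 ((hmem f.1).2 hle)⟩,
        fun _ => rfl, fun _ => rfl⟩
    rw [Nat.card_congr e]
    have h2 := Nat.card_congr (Equiv.sumCompl (· ∈ ρ.ker))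
    rw [Nat.card_sum] at h2
    have h3 : Nat.card {f : (Fin t → S) →ₗ[R] S // f ∈ ρ.ker} = q ^ (t - 1) := hker_card
    rw [hHom] at h2
    omega
  -- combine with the key counting lemma
  have k1 := aux_key (R := R) (S := S) (fun P => T ≤ P)
  have k2 := aux_key (R := R) (S := S) (fun P => ¬ T ≤ P)
  rw [hA, hcard_units] at k1
  rw [hB, hcard_units] at k2
  have hq1pos : 0 < q - 1 := by omega
  constructor
  · apply Nat.eq_of_mul_eq_mul_right hq1pos
    rw [← k1, aux_geom q (by omega) (t - 1)]
  · apply Nat.eq_of_mul_eq_mul_right hq1pos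
    rw [← k2, Nat.mul_sub_one]
    have h2 : q ^ t = q ^ (t - 1) * q := by
      rw [← pow_succ]
      congr 1
      omega
    rw [h2]
end

section
/- Let Q be a finite acyclic quiver, K an infinite field, I an admissible ideal in the path algebra KQ, and M a finite-dimensional representation in rep_K(Q, I). Then the lattice of subrepresentations of M is finite if and only if M is thin, i.e., dim_K(M_a) ≤ 1 for every vertex a of Q. -/
/-! Representations of bound quivers, defined from scratch. -/

/-- A `K`-linear representation of a quiver `V`: a vector space at each vertex and a
linear (structural) map for each arrow. -/
structure QuiverRep (K : Type) [Field K] (V : Type) [Quiver.{1} V] where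
  carrier : V → Type
  [acg : ∀ v, AddCommGroup (carrier v)]
  [mod : ∀ v, Module K (carrier v)]
  map : ∀ {a b : V}, (a ⟶ b) → (carrier a →ₗ[K] carrier b)

attribute [instance] QuiverRep.acg QuiverRep.mod

variable {K : Type} [Field K] {V : Type} [Quiver.{1} V]

/-- Evaluation of a path in a representation: the composite of the structural maps
along the path. -/
def QuiverRep.evalPath (M : QuiverRep K V) : ∀ {a b : V},
    Quiver.Path a b → (M.carrier a →ₗ[K] M.carrier b)
  | _, _, Quiver.Path.nil => LinearMap.id
  | _, _, Quiver.Path.cons p α => (M.map α).comp (M.evalPath p)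

/-- A representation satisfies a relation (a finitely supported `K`-linear
combination of parallel paths) if the corresponding linear combination of path
evaluations vanishes. -/
def QuiverRep.Satisfies (M : QuiverRep K V) {a b : V} (c : Quiver.Path a b →₀ K) :
    Prop :=
  (c.sum fun p k => k • M.evalPath p) = 0

/-- A subrepresentation: a subspace at each vertex, closed under the structural
maps. -/
structure QuiverSubRep (M : QuiverRep K V) where
  sub : ∀ v : V, Submodule K (M.carrier v)
  closed : ∀ {a b : V} (α : a ⟶ b), ∀ x ∈ sub a, M.map α x ∈ sub b


section Aux

variable {K : Type} [Field K] {V : Type} [Quiver.{1} V]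

lemma QuiverSubRep.ext' {M : QuiverRep K V} {N₁ N₂ : QuiverSubRep M}
    (h : N₁.sub = N₂.sub) : N₁ = N₂ := by
  cases N₁; cases N₂; cases h; rfl

lemma submodule_finite_of_finrank_le_one {W : Type} [AddCommGroup W] [Module K W]
    [FiniteDimensional K W] (h : Module.finrank K W ≤ 1) :
    Finite (Submodule K W) := by
  have hdich : ∀ p : Submodule K W, p = ⊥ ∨ p = ⊤ := by
    intro p
    by_cases hp : p = ⊥
    · exact Or.inl hp
    · right
      apply Submodule.eq_top_of_finrank_eq
      have h1 : Module.finrank K p ≠ 0 := fun hz => hp (Submodule.finrank_eq_zero.mp hz)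
      have h2 : Module.finrank K p ≤ Module.finrank K W := Submodule.finrank_le p
      omega
  have : (Set.univ : Set (Submodule K W)).Finite := by
    apply Set.Finite.subset ((Set.finite_singleton (⊤ : Submodule K W)).insert ⊥)
    intro p _
    rcases hdich p with h | h <;> simp [h]
  exact Set.finite_univ_iff.mp this

end Aux

/-- Let `Q` be a finite acyclic quiver, `K` an infinite field, `I` an admissible
ideal of `KQ` (given by a set of relations, each a combination of parallel paths of
length ≥ 2), and `M` a finite-dimensional representation bound by `I`. Then `M` has
finitely many subrepresentations if and only if `M` is thin. -/
theorem stmt_18 (hK : Infinite K) (hV : Finite V) (hA : ∀ a b : V, Finite (a ⟶ b))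
    (hacyclic : ∀ (a : V) (p : Quiver.Path a a), p = Quiver.Path.nil)
    (I : ∀ a b : V, Set (Quiver.Path a b →₀ K))
    (hadm : ∀ (a b : V), ∀ c ∈ I a b, ∀ p ∈ c.support, 2 ≤ p.length)
    (M : QuiverRep K V) (hfd : ∀ v, FiniteDimensional K (M.carrier v))
    (hbound : ∀ (a b : V), ∀ c ∈ I a b, M.Satisfies c) :
    Finite (QuiverSubRep M) ↔ ∀ v : V, Module.finrank K (M.carrier v) ≤ 1 := by
  constructor
  · -- If finitely many subreps, then thin.
    intro hfin v
    by_contra hge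
    push_neg at hge
    have hge2 : 2 ≤ Module.finrank K (M.carrier v) := hge
    obtain ⟨x, y, hxy⟩ : ∃ x y : M.carrier v, LinearIndependent K ![x, y] := by
      haveI := hfd v
      obtain ⟨f, hf⟩ := exists_linearIndependent_of_le_finrank (n := 2) hge2
      refine ⟨f 0, f 1, ?_⟩
      have hfe : ![f 0, f 1] = f := by funext i; fin_cases i <;> rfl
      rw [hfe]; exact hf
    have closed : ∀ c : K, ∀ {a b : V} (α : a ⟶ b), ∀ z ∈
        (⨆ p : Quiver.Path v a, (K ∙ (x + c • y)).map (M.evalPath p)),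
        M.map α z ∈ ⨆ p : Quiver.Path v b, (K ∙ (x + c • y)).map (M.evalPath p) := by
      intro c a b α z hz
      have hle : Submodule.map (M.map α)
          (⨆ p : Quiver.Path v a, (K ∙ (x + c • y)).map (M.evalPath p))
          ≤ ⨆ p : Quiver.Path v b, (K ∙ (x + c • y)).map (M.evalPath p) := by
        rw [Submodule.map_iSup]
        apply iSup_le
        intro p
        rw [← Submodule.map_comp]
        have := le_iSup
          (fun p : Quiver.Path v b => (K ∙ (x + c • y)).map (M.evalPath p)) (p.cons α)
        simpa [QuiverRep.evalPath] using this
      exact hle ⟨z, hz, rfl⟩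
    let N : K → QuiverSubRep M := fun c =>
      ⟨fun b => ⨆ p : Quiver.Path v b, (K ∙ (x + c • y)).map (M.evalPath p), closed c⟩
    have hNv : ∀ c : K, (N c).sub v = K ∙ (x + c • y) := by
      intro c
      apply le_antisymm
      · apply iSup_le
        intro p
        rw [hacyclic v p]
        simp [QuiverRep.evalPath]
      · have := le_iSup
          (fun p : Quiver.Path v v => (K ∙ (x + c • y)).map (M.evalPath p))
          Quiver.Path.nil
        simpa [QuiverRep.evalPath] using this
    have hinj : Function.Injective N := by
      intro c c' h
      have hLc : (K ∙ (x + c • y)) = (K ∙ (x + c' • y)) := by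
        rw [← hNv c, ← hNv c', h]
      have hmem : x + c • y ∈ (K ∙ (x + c' • y)) := by
        rw [← hLc]; exact Submodule.mem_span_singleton_self _
      obtain ⟨k, hk⟩ := Submodule.mem_span_singleton.mp hmem
      have hrel : (k - 1) • x + (k * c' - c) • y = 0 := by
        rw [smul_add, smul_smul] at hk
        calc (k - 1) • x + (k * c' - c) • y
            = k • x + (k * c') • y - (x + c • y) := by
              rw [sub_smul, sub_smul, one_smul]; abel
          _ = 0 := by rw [hk]; abel
      obtain ⟨h1, h2⟩ := LinearIndependent.pair_iff.mp hxy _ _ hrel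
      have hk1 : k = 1 := sub_eq_zero.mp h1
      have hcc : k * c' = c := sub_eq_zero.mp h2
      rw [hk1, one_mul] at hcc
      exact hcc.symm
    exact hK.not_finite (Finite.of_injective N hinj)
  · intro h
    haveI : ∀ v, Finite (Submodule K (M.carrier v)) := fun v =>
      haveI := hfd v
      submodule_finite_of_finrank_le_one (h v)
    exact Finite.of_injective (fun N : QuiverSubRep M => N.sub)
      (fun N₁ N₂ h => QuiverSubRep.ext' h)
end
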